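/- arXiv:1709.07910 — 8 statements merged into one kernel-verified Lean document; each statement's English description precedes it below -/
import Mathlib

section
/- For every natural number n and real x > 0, the n-th Bell polynomial satisfies Dobinski's formula: B_n(x) = e^{-x} · Σ_{j≥0} j^n x^j / j!. -/
lemma dob_summable (n : ℕ) (x : ℝ) (hx : 0 ≤ x) :
    Summable (fun j : ℕ => (j : ℝ) ^ n * x ^ j / (j.factorial : ℝ)) := by
  set M : ℝ := ∑' j : ℕ, (2 * x) ^ j / (j.factorial : ℝ) with hM
  have hsum2x := Real.summable_pow_div_factorial (2 * x)
  have hle : ∀ j : ℕ, (2 * x) ^ j / (j.factorial : ℝ) ≤ M := fun j =>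
    Summable.le_tsum hsum2x j (fun i _ => by positivity)
  have hmaj : Summable (fun j : ℕ => (j : ℝ) ^ n * (1 / 2 : ℝ) ^ j * M) :=
    (summable_pow_mul_geometric_of_norm_lt_one n
      (by rw [Real.norm_eq_abs, abs_of_pos] <;> norm_num : ‖(1/2 : ℝ)‖ < 1)).mul_right M
  apply Summable.of_nonneg_of_le (fun j => by positivity) _ hmaj
  intro j
  have hx' : x ^ j = (1 / 2 : ℝ) ^ j * (2 * x) ^ j := by
    rw [← mul_pow]; ring_nf
  calc (j : ℝ) ^ n * x ^ j / (j.factorial : ℝ)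
      = (j : ℝ) ^ n * (1 / 2 : ℝ) ^ j * ((2 * x) ^ j / (j.factorial : ℝ)) := by
        rw [hx']; ring
    _ ≤ (j : ℝ) ^ n * (1 / 2 : ℝ) ^ j * M := by
        apply mul_le_mul_of_nonneg_left (hle j) (by positivity)

/-- **Dobinski's formula.** If `B` is the sequence of Bell polynomials, defined by
`B 0 = 1` and the recurrence `B (n+1) = X * ∑ k ≤ n, (n.choose k) • B k`, then for every
`n` and every real `x > 0` we have `B_n(x) = e^{-x} ∑_{j ≥ 0} j^n x^j / j!`. -/
theorem bell_dobinski (B : ℕ → Polynomial ℝ)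
    (hB0 : B 0 = 1)
    (hBrec : ∀ n : ℕ, B (n + 1) =
      Polynomial.X * ∑ k ∈ Finset.range (n + 1), Polynomial.C ((n.choose k : ℝ)) * B k) :
    ∀ (n : ℕ) (x : ℝ), 0 < x →
      (B n).eval x =
        Real.exp (-x) * ∑' j : ℕ, (j : ℝ) ^ n * x ^ j / (j.factorial : ℝ) := by
  intro n
  induction n using Nat.strong_induction_on with
  | _ n ih =>
    intro x hx
    match n with
    | 0 =>
      have : ∑' j : ℕ, (j : ℝ) ^ 0 * x ^ j / (j.factorial : ℝ) = Real.exp x := by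
        rw [Real.exp_eq_exp_ℝ, NormedSpace.exp_eq_tsum_div]
        simp
      rw [hB0, this, Polynomial.eval_one, ← Real.exp_add]
      simp
    | n + 1 =>
      have hS : (∑' j : ℕ, (j : ℝ) ^ (n + 1) * x ^ j / (j.factorial : ℝ)) =
          x * ∑ k ∈ Finset.range (n + 1), (n.choose k : ℝ) *
            ∑' j : ℕ, (j : ℝ) ^ k * x ^ j / (j.factorial : ℝ) := by
        rw [Summable.tsum_eq_zero_add (dob_summable (n + 1) x hx.le)]
        simp only [Nat.cast_zero, ne_eq, Nat.add_eq_zero, zero_pow (Nat.succ_ne_zero n),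
          zero_mul, zero_div, zero_add]
        have hterm : ∀ j : ℕ, ((j + 1 : ℕ) : ℝ) ^ (n + 1) * x ^ (j + 1) / ((j + 1).factorial : ℝ)
            = ∑ k ∈ Finset.range (n + 1),
                x * ((n.choose k : ℝ) * ((j : ℝ) ^ k * x ^ j / (j.factorial : ℝ))) := by
          intro j
          have h1 : ((j : ℝ) + 1) ^ (n + 1) = ((j : ℝ) + 1) * ((j : ℝ) + 1) ^ n := by ring
          have h2 : ((j : ℝ) + 1) ^ n =
              ∑ k ∈ Finset.range (n + 1), (n.choose k : ℝ) * (j : ℝ) ^ k := by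
            rw [add_pow]
            apply Finset.sum_congr rfl
            intro k _; ring
          push_cast
          rw [Nat.factorial_succ, h1, h2, Finset.mul_sum, Finset.sum_mul, Finset.sum_div]
          apply Finset.sum_congr rfl
          intro k _
          have hfac1 : ((j : ℝ) + 1) ≠ 0 := by positivity
          have hfac2 : (j.factorial : ℝ) ≠ 0 := by positivity
          push_cast
          field_simp
          ring
        calc (∑' j : ℕ, ((j + 1 : ℕ) : ℝ) ^ (n + 1) * x ^ (j + 1) / ((j + 1).factorial : ℝ))
            = ∑' j : ℕ, ∑ k ∈ Finset.range (n + 1),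
                x * ((n.choose k : ℝ) * ((j : ℝ) ^ k * x ^ j / (j.factorial : ℝ))) := by
              exact tsum_congr hterm
          _ = ∑ k ∈ Finset.range (n + 1), ∑' j : ℕ,
                x * ((n.choose k : ℝ) * ((j : ℝ) ^ k * x ^ j / (j.factorial : ℝ))) := by
              apply Summable.tsum_finsetSum
              intro k _
              exact ((dob_summable k x hx.le).mul_left _).mul_left _
          _ = x * ∑ k ∈ Finset.range (n + 1), (n.choose k : ℝ) *
                ∑' j : ℕ, (j : ℝ) ^ k * x ^ j / (j.factorial : ℝ) := by
              rw [Finset.mul_sum]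
              apply Finset.sum_congr rfl
              intro k _
              rw [tsum_mul_left, tsum_mul_left]
      rw [hBrec n, Polynomial.eval_mul, Polynomial.eval_X, Polynomial.eval_finset_sum]
      simp only [Polynomial.eval_mul, Polynomial.eval_C]
      have : ∀ k ∈ Finset.range (n + 1), (n.choose k : ℝ) * (B k).eval x
          = (n.choose k : ℝ) * (Real.exp (-x) *
              ∑' j : ℕ, (j : ℝ) ^ k * x ^ j / (j.factorial : ℝ)) := by
        intro k hk
        rw [ih k (Finset.mem_range.mp hk) x hx]
      rw [Finset.sum_congr rfl this, hS]
      rw [Finset.mul_sum, Finset.mul_sum]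
      rw [Finset.mul_sum]
      apply Finset.sum_congr rfl
      intro k _
      ring
end

section
/- For every natural number n, nonnegative integer r, and real x > 0, the r-Bell polynomial satisfies B_{n,r}(x) = e^{-x} · Σ_{j≥0} (j+r)^n x^j / j!. -/
lemma coeff_zero_of_hasSum (a : ℕ → ℝ)
    (h : ∀ t : ℝ, t ≠ 0 → HasSum (fun n : ℕ => a n * t ^ n) 0) : a 0 = 0 := by
  have hsa : Summable fun n => |a n| := by
    have := (h 1 one_ne_zero).summable
    simpa [summable_abs_iff] using this
  have hsa1 : Summable fun n => |a (n + 1)| := by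
    exact (summable_nat_add_iff 1).mpr hsa
  set M : ℝ := ∑' n, |a (n + 1)| with hM
  have hM0 : 0 ≤ M := tsum_nonneg fun n => abs_nonneg _
  have key : ∀ t : ℝ, 0 < t → t ≤ 1 → |a 0| ≤ M * t := by
    intro t ht ht1
    have H : HasSum (fun n : ℕ => a n * t ^ n) 0 := h t (ne_of_gt ht)
    have Hshift : HasSum (fun n : ℕ => a (n + 1) * t ^ (n + 1)) (-(a 0)) := by
      rw [hasSum_nat_add_iff (f := fun n : ℕ => a n * t ^ n) 1]
      simpa using H
    have hsum2 : Summable fun n => |a (n + 1)| * |t| ^ (n + 1) := by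
      simpa [abs_mul, abs_pow] using Hshift.summable.abs
    have habs : |(-(a 0))| ≤ ∑' n, |a (n + 1)| * |t| ^ (n + 1) := by
      rw [← Hshift.tsum_eq]
      simpa using norm_tsum_le_tsum_norm
        (f := fun n : ℕ => a (n+1) * t ^ (n+1)) (by simpa using hsum2)
    have hle : ∑' n, |a (n + 1)| * |t| ^ (n + 1) ≤ ∑' n, |a (n + 1)| * t := by
      apply Summable.tsum_le_tsum _ hsum2 (hsa1.mul_right t)
      intro n
      rw [abs_of_pos ht]
      have h1 : t ^ (n + 1) ≤ t := by
        calc t ^ (n + 1) ≤ t ^ 1 := pow_le_pow_of_le_one (le_of_lt ht) ht1 (by omega)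
        _ = t := pow_one t
      exact mul_le_mul_of_nonneg_left h1 (abs_nonneg _)
    rw [tsum_mul_right] at hle
    calc |a 0| = |(-(a 0))| := (abs_neg _).symm
      _ ≤ _ := habs
      _ ≤ M * t := hle
  by_contra hne
  have hpos : 0 < |a 0| := abs_pos.mpr hne
  set t := min 1 (|a 0| / (2 * (M + 1))) with hT
  have htpos : 0 < t := lt_min one_pos (by positivity)
  have ht1 : t ≤ 1 := min_le_left _ _
  have := key t htpos ht1
  have h2 : M * t ≤ M * (|a 0| / (2 * (M + 1))) :=
    mul_le_mul_of_nonneg_left (min_le_right _ _) hM0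
  have h3 : M * (|a 0| / (2 * (M + 1))) < |a 0| := by
    have hd : (0:ℝ) < 2 * (M + 1) := by positivity
    rw [← mul_div_assoc, div_lt_iff₀ hd]
    nlinarith
  linarith

lemma coeff_shift_of_hasSum (a : ℕ → ℝ)
    (h : ∀ t : ℝ, t ≠ 0 → HasSum (fun n : ℕ => a n * t ^ n) 0) :
    ∀ t : ℝ, t ≠ 0 → HasSum (fun n : ℕ => a (n + 1) * t ^ n) 0 := by
  have h0 : a 0 = 0 := coeff_zero_of_hasSum a h
  intro t ht
  have Hshift : HasSum (fun n : ℕ => a (n + 1) * t ^ (n + 1)) 0 := by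
    rw [hasSum_nat_add_iff (f := fun n : ℕ => a n * t ^ n) 1]
    simpa [h0] using h t ht
  have := Hshift.mul_right t⁻¹
  rw [zero_mul] at this
  refine this.congr_fun fun n => ?_
  field_simp [pow_succ]
  ring

lemma coeff_eq_zero_of_hasSum (a : ℕ → ℝ)
    (h : ∀ t : ℝ, HasSum (fun n : ℕ => a n * t ^ n) 0) : ∀ n, a n = 0 := by
  suffices H : ∀ (n : ℕ) (b : ℕ → ℝ),
      (∀ t : ℝ, t ≠ 0 → HasSum (fun m : ℕ => b m * t ^ m) 0) → b n = 0 by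
    exact fun n => H n a fun t _ => h t
  intro n
  induction n with
  | zero => exact fun b hb => coeff_zero_of_hasSum b hb
  | succ n ih => exact fun b hb => ih (fun m => b (m + 1)) (coeff_shift_of_hasSum b hb)

lemma hasSum_exp_real' (y : ℝ) :
    HasSum (fun n : ℕ => y ^ n / (n.factorial : ℝ)) (Real.exp y) := by
  rw [Real.exp_eq_exp_ℝ]
  exact NormedSpace.expSeries_div_hasSum_exp y

set_option maxHeartbeats 1000000 in
lemma hasSum_C (r : ℕ) (x : ℝ) (hx : 0 < x) (t : ℝ) :
    HasSum (fun n : ℕ =>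
        (∑' j : ℕ, ((j : ℝ) + r) ^ n * x ^ j / (j.factorial : ℝ)) * t ^ n / (n.factorial : ℝ))
      (Real.exp ((r : ℝ) * t) * Real.exp (x * Real.exp t)) := by
  obtain ⟨f, hf⟩ : ∃ f : ℕ × ℕ → ℝ, f = fun p =>
      (x ^ p.1 / (p.1.factorial : ℝ)) *
        ((((p.1 : ℝ) + r) * t) ^ p.2 / (p.2.factorial : ℝ)) := ⟨_, rfl⟩
  -- fiberwise (over j) sums
  have hfib : ∀ j : ℕ, HasSum (fun m => f (j, m))
      ((x ^ j / (j.factorial : ℝ)) * Real.exp (((j : ℝ) + r) * t)) := by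
    intro j
    simp only [hf]
    exact (hasSum_exp_real' (((j : ℝ) + r) * t)).mul_left _
  -- the j-sum of the fiber sums
  have hj : HasSum (fun j : ℕ => (x ^ j / (j.factorial : ℝ)) * Real.exp (((j : ℝ) + r) * t))
      (Real.exp ((r : ℝ) * t) * Real.exp (x * Real.exp t)) := by
    have := (hasSum_exp_real' (x * Real.exp t)).mul_left (Real.exp ((r : ℝ) * t))
    refine this.congr_fun fun j => ?_
    rw [mul_pow, ← Real.exp_nat_mul, add_mul, Real.exp_add]
    ring
  -- summability of f
  have hsf : Summable f := by
    rw [← summable_abs_iff]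
    have habs : (fun p => |f p|) = fun p : ℕ × ℕ =>
        (x ^ p.1 / (p.1.factorial : ℝ)) *
          ((((p.1 : ℝ) + r) * |t|) ^ p.2 / (p.2.factorial : ℝ)) := by
      funext p
      have h1 : (0:ℝ) ≤ (p.1 : ℝ) + r := by positivity
      simp only [hf]
      rw [abs_mul, abs_div, abs_div, abs_pow, abs_pow, abs_mul,
        abs_of_pos hx, abs_of_nonneg h1, Nat.abs_cast, Nat.abs_cast]
    rw [habs, summable_prod_of_nonneg (fun p => by positivity)]
    constructor
    · intro j
      simpa using
        ((hasSum_exp_real' (((j : ℝ) + r) * |t|)).mul_left (x ^ j / (j.factorial : ℝ))).summable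
    · have heq : ∀ j : ℕ, ∑' m : ℕ, (x ^ j / (j.factorial : ℝ)) *
          ((((j : ℝ) + r) * |t|) ^ m / (m.factorial : ℝ)) =
          (x ^ j / (j.factorial : ℝ)) * Real.exp (((j : ℝ) + r) * |t|) := fun j =>
        ((hasSum_exp_real' (((j : ℝ) + r) * |t|)).mul_left _).tsum_eq
      simp only [heq]
      have hj' : HasSum
          (fun j : ℕ => (x ^ j / (j.factorial : ℝ)) * Real.exp (((j : ℝ) + r) * |t|))
          (Real.exp ((r : ℝ) * |t|) * Real.exp (x * Real.exp |t|)) := by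
        have := (hasSum_exp_real' (x * Real.exp |t|)).mul_left (Real.exp ((r : ℝ) * |t|))
        refine this.congr_fun fun j => ?_
        rw [mul_pow, ← Real.exp_nat_mul, add_mul, Real.exp_add]
        ring
      exact hj'.summable
  -- total sum of f equals the target
  have htot : HasSum f (Real.exp ((r : ℝ) * t) * Real.exp (x * Real.exp t)) := by
    have h1 := hsf.hasSum
    have h2 : HasSum (fun j : ℕ => (x ^ j / (j.factorial : ℝ)) * Real.exp (((j : ℝ) + r) * t))
        (∑' p, f p) := h1.prod_fiberwise hfib
    rwa [← hj.unique h2] at h1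
  -- swap and fiber over n
  have hswap : HasSum (f ∘ ⇑(Equiv.prodComm ℕ ℕ))
      (Real.exp ((r : ℝ) * t) * Real.exp (x * Real.exp t)) :=
    (Equiv.prodComm ℕ ℕ).hasSum_iff.mpr htot
  have hfib2 : ∀ n : ℕ, HasSum (fun j => f (j, n)) (∑' j, f (j, n)) := fun n =>
    (hswap.summable.prod_factor n).hasSum
  have hn : HasSum (fun n : ℕ => ∑' j, f (j, n))
      (Real.exp ((r : ℝ) * t) * Real.exp (x * Real.exp t)) :=
    hswap.prod_fiberwise hfib2
  refine hn.congr_fun fun n => ?_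
  have heq : ∀ j : ℕ, f (j, n) =
      (((j : ℝ) + r) ^ n * x ^ j / (j.factorial : ℝ)) * (t ^ n / (n.factorial : ℝ)) := by
    intro j
    simp only [hf]
    rw [mul_pow]
    ring
  rw [tsum_congr heq, tsum_mul_right]
  ring

/-- **Dobinski's formula for `r`-Bell polynomials.** If `B n` is the `r`-Bell polynomial
`B_{n,r}`, characterized by the exponential generating function
`∑ n, B_{n,r}(x) t^n / n! = e^{r t} · exp (x (e^t − 1))`, then for every `n` and every real
`x > 0` we have `B_{n,r}(x) = e^{-x} ∑_{j ≥ 0} (j + r)^n x^j / j!`. -/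
theorem rBell_dobinski (r : ℕ) (B : ℕ → ℝ → ℝ)
    (hB : ∀ (x t : ℝ), HasSum (fun n : ℕ => B n x * t ^ n / (n.factorial : ℝ))
      (Real.exp ((r : ℝ) * t) * Real.exp (x * (Real.exp t - 1)))) :
    ∀ (n : ℕ) (x : ℝ), 0 < x →
      B n x = Real.exp (-x) * ∑' j : ℕ, ((j : ℝ) + r) ^ n * x ^ j / (j.factorial : ℝ) := by
  intro n x hx
  set C : ℕ → ℝ := fun n =>
    Real.exp (-x) * ∑' j : ℕ, ((j : ℝ) + r) ^ n * x ^ j / (j.factorial : ℝ) with hC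
  have hCsum : ∀ t : ℝ, HasSum (fun n : ℕ => C n * t ^ n / (n.factorial : ℝ))
      (Real.exp ((r : ℝ) * t) * Real.exp (x * (Real.exp t - 1))) := by
    intro t
    have h1 := (hasSum_C r x hx t).mul_left (Real.exp (-x))
    have h2 : Real.exp (-x) * (Real.exp ((r : ℝ) * t) * Real.exp (x * Real.exp t)) =
        Real.exp ((r : ℝ) * t) * Real.exp (x * (Real.exp t - 1)) := by
      rw [← Real.exp_add, ← Real.exp_add, ← Real.exp_add]
      ring_nf
    rw [h2] at h1
    refine h1.congr_fun fun m => ?_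
    rw [hC]
    ring
  have hdiff : ∀ t : ℝ, HasSum
      (fun m : ℕ => ((B m x - C m) / (m.factorial : ℝ)) * t ^ m) 0 := by
    intro t
    have := (hB x t).sub (hCsum t)
    rw [sub_self] at this
    refine this.congr_fun fun m => ?_
    ring
  have hz := coeff_eq_zero_of_hasSum _ hdiff n
  have hfac : ((n.factorial : ℝ)) ≠ 0 := Nat.cast_ne_zero.mpr n.factorial_ne_zero
  have hBC : B n x = C n := by
    field_simp at hz
    linarith
  rw [hBC, hC]
end

section
/- For all natural numbers n and r, there holds e^{-x} Σ_{k≥0} (k+r)_n x^k/k! = Σ_{j=0}^{min(n,r)} C(n,j) (r)_j x^{n−j}, where (m)_j denotes the falling factorial. -/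
open Finset

/-- `∑_k (k)_m x^k/k! = x^m e^x` as a `HasSum`. -/
lemma hasSum_descFactorial_mul (m : ℕ) (x : ℝ) :
    HasSum (fun k : ℕ => (k.descFactorial m : ℝ) * x ^ k / (k.factorial : ℝ))
      (x ^ m * Real.exp x) := by
  have h : HasSum (fun j : ℕ => x ^ j / (j.factorial : ℝ)) (Real.exp x) :=
    Real.exp_eq_exp_ℝ ▸ NormedSpace.expSeries_div_hasSum_exp x
  have h2 := h.mul_left (x ^ m)
  have key : (fun j : ℕ => x ^ m * (x ^ j / (j.factorial : ℝ)))
      = fun j : ℕ => ((j + m).descFactorial m : ℝ) * x ^ (j + m) / ((j + m).factorial : ℝ) := by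
    funext j
    have heq : ((j + m).descFactorial m : ℝ) * (j.factorial : ℝ) = ((j + m).factorial : ℝ) := by
      rw [← Nat.cast_mul, Nat.add_descFactorial_eq_ascFactorial, Nat.mul_comm,
        Nat.factorial_mul_ascFactorial j m]
    have hj : (j.factorial : ℝ) ≠ 0 := Nat.cast_ne_zero.mpr (Nat.factorial_ne_zero j)
    have hjm : ((j + m).factorial : ℝ) ≠ 0 := Nat.cast_ne_zero.mpr (Nat.factorial_ne_zero _)
    rw [← mul_div_assoc, div_eq_div_iff hj hjm, ← heq, pow_add]
    ring
  rw [key] at h2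
  apply (hasSum_nat_add_iff' (f := fun k : ℕ =>
    (k.descFactorial m : ℝ) * x ^ k / (k.factorial : ℝ)) m).mp
  · have hz : ∑ i ∈ range m, (i.descFactorial m : ℝ) * x ^ i / (i.factorial : ℝ) = 0 := by
      apply Finset.sum_eq_zero
      intro i hi
      rw [Nat.descFactorial_eq_zero_iff_lt.mpr (Finset.mem_range.mp hi)]
      simp
    rw [hz, sub_zero]
    exact h2

/-- Vandermonde for falling factorials: `(k+r)_n = ∑ C(n,j) (r)_j (k)_{n-j}`. -/
lemma descFactorial_add_eq_sum (k r n : ℕ) :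
    (k + r).descFactorial n
      = ∑ j ∈ range (n + 1), n.choose j * r.descFactorial j * k.descFactorial (n - j) := by
  have h1 : (k + r).descFactorial n = n.factorial * (r + k).choose n := by
    rw [add_comm r k]; exact Nat.descFactorial_eq_factorial_mul_choose _ _
  rw [h1, Nat.add_choose_eq, Finset.Nat.sum_antidiagonal_eq_sum_range_succ_mk, Finset.mul_sum]
  apply Finset.sum_congr rfl
  intro j hj
  have hjn : j ≤ n := Nat.lt_succ_iff.mp (Finset.mem_range.mp hj)
  rw [Nat.descFactorial_eq_factorial_mul_choose r j,
    Nat.descFactorial_eq_factorial_mul_choose k (n - j)]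
  rw [← Nat.choose_mul_factorial_mul_factorial hjn]
  ring

/-- The umbral identity `(B_x + r)_n = ∑_{j=0}^{min(n,r)} C(n,j) (r)_j x^{n−j}`:
for all `n`, `r` and real `x`,
`e^{-x} ∑ k ≥ 0, (k+r)_n x^k / k! = ∑_{j=0}^{min(n,r)} C(n,j) (r)_j x^{n−j}`. -/
theorem umbral_shifted_falling_factorial (n r : ℕ) (x : ℝ) :
    Real.exp (-x) * ∑' k : ℕ, ((k + r).descFactorial n : ℝ) * x ^ k / (k.factorial : ℝ)
      = ∑ j ∈ Finset.range (min n r + 1),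
          (n.choose j : ℝ) * (r.descFactorial j : ℝ) * x ^ (n - j) := by
  have hsum : HasSum (fun k : ℕ => ((k + r).descFactorial n : ℝ) * x ^ k / (k.factorial : ℝ))
      (∑ j ∈ range (n + 1),
        (n.choose j : ℝ) * (r.descFactorial j : ℝ) * (x ^ (n - j) * Real.exp x)) := by
    have h : ∀ j ∈ range (n + 1), HasSum
        (fun k : ℕ => (n.choose j : ℝ) * (r.descFactorial j : ℝ) *
          ((k.descFactorial (n - j) : ℝ) * x ^ k / (k.factorial : ℝ)))
        ((n.choose j : ℝ) * (r.descFactorial j : ℝ) * (x ^ (n - j) * Real.exp x)) := by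
      intro j _
      exact (hasSum_descFactorial_mul (n - j) x).mul_left _
    have H := hasSum_sum h
    convert H using 2 with k
    rw [descFactorial_add_eq_sum k r n]
    push_cast
    rw [Finset.sum_mul, Finset.sum_div]
    apply Finset.sum_congr rfl
    intro j _
    ring
  rw [hsum.tsum_eq]
  rw [Finset.mul_sum]
  have hmin : min n r + 1 ≤ n + 1 := by omega
  rw [← Finset.sum_subset (Finset.range_subset_range.mpr hmin)]
  · apply Finset.sum_congr rfl
    intro j _
    rw [Real.exp_neg]
    field_simp
  · intro j hj hj'
    have : r < j := by
      simp only [Finset.mem_range] at hj hj'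
      omega
    rw [Nat.descFactorial_eq_zero_iff_lt.mpr this]
    simp
end

section
/- For every natural number n ≥ 1 and every nonnegative integer r, the polynomial x^r Σ_{j=0}^{min(n,r)} C(n,j) (r!/(r−j)!) x^{n−j} has only real zeros. -/
open Polynomial

/-- A real polynomial has only real zeros: every complex root has imaginary part zero. -/
def RZ (p : Polynomial ℝ) : Prop :=
  ∀ z : ℂ, (p.map (algebraMap ℝ ℂ)).IsRoot z → z.im = 0

lemma RZ.derivEval (z : ℂ) :
    ∀ (s : Multiset ℂ), (∀ a ∈ s, z - a ≠ 0) →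
    ((s.map (fun a => X - C a)).prod).derivative.eval z
      = ((s.map (fun a => X - C a)).prod).eval z * (s.map (fun a => (z - a)⁻¹)).sum := by
  intro s
  induction s using Multiset.induction with
  | empty => simp
  | cons a s ih =>
    intro h
    have ha : z - a ≠ 0 := h a (Multiset.mem_cons_self _ _)
    have hs := ih (fun b hb => h b (Multiset.mem_cons_of_mem hb))
    simp only [Multiset.map_cons, Multiset.prod_cons, Multiset.sum_cons,
      derivative_mul, derivative_sub, derivative_X, derivative_C, eval_add, eval_mul,
      eval_sub, eval_X, eval_C, eval_one, sub_zero, one_mul]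
    rw [hs]
    field_simp

lemma RZ.add_derivative {p : Polynomial ℝ} (hp : RZ p) : RZ (p + p.derivative) := by
  intro z hz
  by_contra him
  set q := p.map (algebraMap ℝ ℂ) with hq
  have hroot : q.eval z + q.derivative.eval z = 0 := by
    have : ((p + p.derivative).map (algebraMap ℝ ℂ)).eval z = 0 := hz
    rw [Polynomial.map_add] at this
    rw [hq, Polynomial.derivative_map]
    rw [Polynomial.eval_add] at this
    exact this
  have hqz : q.eval z ≠ 0 := fun h0 => him (hp z h0)
  have hq0 : q ≠ 0 := fun h => hqz (by simp [h])
  have hsplit : Splits q := IsAlgClosed.splits q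
  have hfac := hsplit.eq_prod_roots
  set s := q.roots with hsdef
  have hmem : ∀ a ∈ s, q.IsRoot a := fun a ha => ((Polynomial.mem_roots hq0).1 ha)
  have hmemim : ∀ a ∈ s, a.im = 0 := fun a ha => hp a (hmem a ha)
  have hne : ∀ a ∈ s, z - a ≠ 0 := by
    intro a ha h0
    apply hqz
    have : z = a := by linear_combination h0
    rw [this]; exact hmem a ha
  set P := (s.map (fun a => X - C a)).prod with hP
  have hPz : P.eval z ≠ 0 := by
    rw [hP, eval_multiset_prod]
    refine Multiset.prod_ne_zero ?_
    simp only [Multiset.map_map, Function.comp, eval_sub, eval_X, eval_C]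
    intro h0
    obtain ⟨a, ha, ha'⟩ := Multiset.mem_map.1 h0
    exact hne a ha ha'
  set S := (s.map (fun a => (z - a)⁻¹)).sum with hS
  have hder : P.derivative.eval z = P.eval z * S := RZ.derivEval z s hne
  have hc : q.leadingCoeff ≠ 0 := leadingCoeff_ne_zero.2 hq0
  have key : 1 + S = 0 := by
    have h1 : q.eval z = (C q.leadingCoeff * P).eval z := by rw [← hfac]
    have h2 : q.derivative.eval z = (C q.leadingCoeff * P).derivative.eval z := by rw [← hfac]
    rw [h1, h2] at hroot
    simp only [derivative_mul, derivative_C, zero_mul, zero_add, eval_mul, eval_C] at hroot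
    rw [hder] at hroot
    have : q.leadingCoeff * P.eval z * (1 + S) = 0 := by ring_nf; linear_combination hroot
    rcases mul_eq_zero.1 this with h | h
    · exact absurd h (mul_ne_zero hc hPz)
    · exact h
  -- imaginary part of S
  have hSim : S.im = (s.map (fun a => ((z - a)⁻¹).im)).sum := by
    rw [hS]
    induction s using Multiset.induction with
    | empty => simp
    | cons a s ih => simp [Complex.add_im, ih]
  rcases Multiset.empty_or_exists_mem s with hs0 | ⟨a0, ha0⟩
  · rw [hs0] at hS
    simp at hS
    rw [hS] at key
    norm_num at key
  · have hterm : ∀ a ∈ s, ((z - a)⁻¹).im = -z.im * ((Complex.normSq (z - a))⁻¹) := by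
      intro a ha
      rw [Complex.inv_im]
      have : (z - a).im = z.im := by
        rw [Complex.sub_im, hmemim a ha, sub_zero]
      rw [this, neg_div, div_eq_mul_inv, neg_mul]
    have hmapeq : (s.map (fun a => ((z - a)⁻¹).im))
        = s.map (fun a => -z.im * ((Complex.normSq (z - a))⁻¹)) :=
      Multiset.map_congr rfl hterm
    have hSim2 : S.im = -z.im * (s.map (fun a => (Complex.normSq (z - a))⁻¹)).sum := by
      rw [hSim, hmapeq, Multiset.sum_map_mul_left]
    have hS0 : S.im = 0 := by
      have : S = -1 := by linear_combination key
      rw [this]; norm_num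
    have hTpos : 0 < (s.map (fun a => (Complex.normSq (z - a))⁻¹)).sum := by
      obtain ⟨t, ht⟩ := Multiset.exists_cons_of_mem ha0
      have h1 : 0 < (Complex.normSq (z - a0))⁻¹ :=
        inv_pos.2 (Complex.normSq_pos.2 (hne a0 ha0))
      have h2 : 0 ≤ (t.map (fun a => (Complex.normSq (z - a))⁻¹)).sum := by
        refine Multiset.sum_nonneg ?_
        intro x hx
        obtain ⟨a, ha, rfl⟩ := Multiset.mem_map.1 hx
        have has : a ∈ s := by rw [ht]; exact Multiset.mem_cons_of_mem ha
        exact le_of_lt (inv_pos.2 (Complex.normSq_pos.2 (hne a has)))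
      rw [ht, Multiset.map_cons, Multiset.sum_cons]
      linarith
    rw [hSim2] at hS0
    rcases mul_eq_zero.1 hS0 with h | h
    · exact him (by linarith [neg_eq_zero.1 h])
    · exact absurd h (ne_of_gt hTpos)

lemma RZ.X_pow_mul {p : Polynomial ℝ} (hp : RZ p) (k : ℕ) : RZ (X ^ k * p) := by
  intro z hz
  rw [Polynomial.IsRoot, Polynomial.map_mul, Polynomial.map_pow, Polynomial.map_X,
    eval_mul, eval_pow, eval_X] at hz
  rcases mul_eq_zero.1 hz with h | h
  · rw [pow_eq_zero_iff'] at h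
    rw [h.1]; rfl
  · exact hp z h

lemma RZ.qstep (r k : ℕ) :
    (∑ j ∈ Finset.range (k+2), C ((((k+1).choose j * r.descFactorial j : ℕ)):ℝ) * X^(r-j))
    = (∑ j ∈ Finset.range (k+1), C (((k.choose j * r.descFactorial j : ℕ)):ℝ) * X^(r-j))
      + derivative (∑ j ∈ Finset.range (k+1),
          C (((k.choose j * r.descFactorial j : ℕ)):ℝ) * X^(r-j)) := by
  rw [derivative_sum]
  have hder : ∀ j, derivative (C (((k.choose j * r.descFactorial j : ℕ)):ℝ) * X^(r-j))
      = C (((k.choose j * r.descFactorial (j+1) : ℕ)):ℝ) * X^(r-(j+1)) := by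
    intro j
    rw [derivative_C_mul, derivative_X_pow, ← mul_assoc, ← C_mul, Nat.sub_sub]
    congr 2
    rw [Nat.descFactorial_succ]
    push_cast
    ring
  simp only [hder]
  rw [Finset.sum_range_succ' _ (k+1)]
  have hU : ∀ j, C ((((k+1).choose (j+1) * r.descFactorial (j+1) : ℕ)):ℝ) * X^(r-(j+1))
      = C (((k.choose (j+1) * r.descFactorial (j+1) : ℕ)):ℝ) * X^(r-(j+1))
        + C (((k.choose j * r.descFactorial (j+1) : ℕ)):ℝ) * X^(r-(j+1)) := by
    intro j
    rw [Nat.choose_succ_succ', Nat.add_mul, Nat.cast_add, C_add, add_mul]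
    exact add_comm _ _
  simp only [hU]
  rw [Finset.sum_add_distrib]
  rw [Finset.sum_range_succ
    (fun j => C (((k.choose (j+1) * r.descFactorial (j+1) : ℕ)):ℝ) * X^(r-(j+1))) k]
  rw [Finset.sum_range_succ' (fun j => C (((k.choose j * r.descFactorial j : ℕ)):ℝ) * X^(r-j)) k]
  simp [Nat.choose_succ_self]
  abel

lemma RZ.qRZ (r : ℕ) : ∀ k : ℕ,
    RZ (∑ j ∈ Finset.range (k+1), C (((k.choose j * r.descFactorial j : ℕ)):ℝ) * X^(r-j)) := by
  intro k
  induction k with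
  | zero =>
    have : (∑ j ∈ Finset.range (0+1), C (((Nat.choose 0 j * r.descFactorial j : ℕ)):ℝ) * X^(r-j))
        = X ^ r := by
      simp
    rw [this]
    intro z hz
    rw [Polynomial.IsRoot, Polynomial.map_pow, Polynomial.map_X, eval_pow, eval_X,
      pow_eq_zero_iff'] at hz
    rw [hz.1]; rfl
  | succ k ih =>
    rw [show k + 1 + 1 = k + 2 from rfl, RZ.qstep]
    exact RZ.add_derivative ih

lemma RZ.final_eq (n r : ℕ) :
    X ^ r * ∑ j ∈ Finset.range (min n r + 1),
        C ((n.choose j : ℝ) * (r.descFactorial j : ℝ)) * X ^ (n - j)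
    = X ^ n * ∑ j ∈ Finset.range (n+1),
        C (((n.choose j * r.descFactorial j : ℕ)):ℝ) * X^(r-j) := by
  rw [Finset.mul_sum, Finset.mul_sum]
  rw [Finset.sum_subset (Finset.range_subset_range.2 (by omega : min n r + 1 ≤ n + 1))
    (fun j hj hj' => ?_)]
  · refine Finset.sum_congr rfl (fun j hj => ?_)
    rw [Finset.mem_range] at hj
    by_cases hjr : j ≤ r
    · have h1 : X ^ r * (C ((n.choose j : ℝ) * (r.descFactorial j : ℝ)) * X ^ (n - j))
          = C ((n.choose j : ℝ) * (r.descFactorial j : ℝ)) * X ^ (r + (n - j)) := by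
        rw [pow_add]; ring
      have h2 : X ^ n * (C (((n.choose j * r.descFactorial j : ℕ)):ℝ) * X ^ (r - j))
          = C (((n.choose j * r.descFactorial j : ℕ)):ℝ) * X ^ (n + (r - j)) := by
        rw [pow_add]; ring
      rw [h1, h2, show r + (n - j) = n + (r - j) by omega]
      congr 1
      push_cast
      ring
    · have hd : r.descFactorial j = 0 := Nat.descFactorial_eq_zero_iff_lt.2 (by omega)
      rw [hd]
      simp
  · have h1 : ¬ j < min n r + 1 := by simpa using hj'
    have h2 : j < n + 1 := by simpa using hj
    have hd : r.descFactorial j = 0 := Nat.descFactorial_eq_zero_iff_lt.2 (by omega)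
    rw [hd]
    simp

/-- For `n ≥ 1` and any `r ≥ 0`, the polynomial
`x^r ∑_{j=0}^{min(n,r)} C(n,j) (r!/(r−j)!) x^{n−j}` has only real zeros. -/
theorem real_rooted_shifted_falling (n r : ℕ) (hn : 1 ≤ n) :
    RZ (Polynomial.X ^ r *
      ∑ j ∈ Finset.range (min n r + 1),
        Polynomial.C ((n.choose j : ℝ) * (r.descFactorial j : ℝ)) * Polynomial.X ^ (n - j)) := by
  rw [RZ.final_eq]
  exact RZ.X_pow_mul (RZ.qRZ r n) n
end

section
/- For every natural number n ≥ 1, the Lah polynomial L_n(x) := Σ_{k=1}^{n} L(n,k) x^k, where L(n,k) = (n!/k!) C(n−1,k−1) are the Lah numbers, has only real zeros. -/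
/-- The Lah number `L(n,k) = (n!/k!) · C(n−1, k−1)`. -/
def lahNum : ℕ → ℕ → ℕ
  | 0, 0 => 1
  | 0, _ + 1 => 0
  | _ + 1, 0 => 0
  | n + 1, k + 1 => ((n + 1).factorial / (k + 1).factorial) * n.choose k

lemma lah_zero_right (n : ℕ) (hn : 1 ≤ n) : lahNum n 0 = 0 := by
  cases n with
  | zero => omega
  | succ m => rfl

lemma lah_zero_of_lt (n k : ℕ) (h : n < k) : lahNum n k = 0 := by
  cases n with
  | zero => cases k with
    | zero => omega
    | succ b => rfl
  | succ a => cases k with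
    | zero => omega
    | succ b =>
      show ((a + 1).factorial / (b + 1).factorial) * a.choose b = 0
      rw [Nat.choose_eq_zero_of_lt (by omega), mul_zero]

lemma lah_mul_fact (n k : ℕ) (hn : 1 ≤ n) (hk : 1 ≤ k) :
    lahNum n k * k.factorial = n.factorial * (n - 1).choose (k - 1) := by
  obtain ⟨a, rfl⟩ : ∃ a, n = a + 1 := ⟨n - 1, by omega⟩
  obtain ⟨b, rfl⟩ : ∃ b, k = b + 1 := ⟨k - 1, by omega⟩
  show ((a + 1).factorial / (b + 1).factorial) * a.choose b * (b + 1).factorial =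
    (a + 1).factorial * a.choose b
  rcases le_or_gt (b + 1) (a + 1) with h | h
  · rw [mul_right_comm, Nat.div_mul_cancel (Nat.factorial_dvd_factorial h)]
  · rw [Nat.choose_eq_zero_of_lt (by omega), mul_zero, mul_zero, zero_mul]

lemma lah_succ (n k : ℕ) (hn : 1 ≤ n) :
    lahNum (n + 1) (k + 1) = lahNum n k + (n + (k + 1)) * lahNum n (k + 1) := by
  have hf : 0 < (k + 1).factorial := Nat.factorial_pos _
  apply Nat.eq_of_mul_eq_mul_right hf
  rw [lah_mul_fact (n + 1) (k + 1) (by omega) (by omega)]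
  rw [add_mul, mul_assoc, lah_mul_fact n (k + 1) hn (by omega)]
  simp only [Nat.add_sub_cancel]
  cases k with
  | zero =>
    rw [lah_zero_right n hn]
    simp [Nat.factorial_succ]
  | succ j =>
    have hfs : (j + 2).factorial = (j + 2) * (j + 1).factorial := rfl
    rw [hfs, ← mul_assoc, mul_right_comm, lah_mul_fact n (j + 1) hn (by omega)]
    -- goal: (n+1)! * n.choose (j+1) = n! * (n-1).choose j * (j+2) + (n+(j+2)) * (n! * (n-1).choose (j+1))
    obtain ⟨m, rfl⟩ : ∃ m, n = m + 1 := ⟨n - 1, by omega⟩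
    simp only [Nat.add_sub_cancel]
    rcases le_or_gt j m with hjm | hjm
    · obtain ⟨d, rfl⟩ : ∃ d, m = j + d := ⟨m - j, by omega⟩
      have key : (j + d).choose (j + 1) * (j + 1) = (j + d).choose j * d := by
        have := Nat.choose_succ_right_eq (j + d) j
        simpa using this
      rw [Nat.choose_succ_succ, Nat.factorial_succ]
      simp only [Nat.succ_eq_add_one]
      have key' : ((j + d).choose (j + 1) : ℤ) * (j + 1) = (j + d).choose j * d := by
        exact_mod_cast key
      zify
      linear_combination -((j + d + 1).factorial : ℤ) * key'
    · rw [Nat.choose_eq_zero_of_lt (by omega), Nat.choose_eq_zero_of_lt (by omega),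
        Nat.choose_eq_zero_of_lt (by omega)]
      ring

open Polynomial

noncomputable def LP (n : ℕ) : ℝ[X] := ∑ k ∈ Finset.Icc 1 n, C (lahNum n k : ℝ) * X ^ k

lemma lah_cast_zero (n m : ℕ) (hn : 1 ≤ n) (h : ¬ (1 ≤ m ∧ m ≤ n)) : (lahNum n m : ℝ) = 0 := by
  rcases Nat.lt_or_ge n m with h1 | h1
  · rw [lah_zero_of_lt n m h1]; norm_num
  · have : m = 0 := by omega
    rw [this, lah_zero_right n hn]; norm_num

lemma LP_coeff (n m : ℕ) (hn : 1 ≤ n) : (LP n).coeff m = (lahNum n m : ℝ) := by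
  rw [LP, finset_sum_coeff]
  simp only [coeff_C_mul, coeff_X_pow, mul_ite, mul_one, mul_zero]
  rw [Finset.sum_ite_eq (Finset.Icc 1 n) m fun k => (lahNum n k : ℝ)]
  split_ifs with h
  · rfl
  · rw [lah_cast_zero n m hn (by simpa [Finset.mem_Icc] using h)]

lemma LP_rec (n : ℕ) (hn : 1 ≤ n) :
    LP (n + 1) = (X + C (n : ℝ)) * LP n + X * (LP n).derivative := by
  ext m
  rw [LP_coeff (n + 1) m (by omega), coeff_add, add_mul, coeff_add, coeff_C_mul]
  cases m with
  | zero =>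
    rw [mul_coeff_zero, mul_coeff_zero, coeff_X_zero, zero_mul, LP_coeff n 0 hn,
      lah_cast_zero n 0 hn (by omega), lah_cast_zero (n+1) 0 (by omega) (by omega)]
    ring
  | succ m =>
    rw [coeff_X_mul, coeff_X_mul, coeff_derivative, LP_coeff n m hn]
    rw [LP_coeff n (m+1) hn]
    have := lah_succ n m hn
    push_cast [this]
    ring

open Filter Topology in
lemma poly_mul_exp_tendsto_atBot (q : ℝ[X]) :
    Tendsto (fun x => q.eval x * Real.exp x) atBot (𝓝 0) := by
  have h := (q.comp (-X)).tendsto_div_exp_atTop.comp tendsto_neg_atBot_atTop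
  refine h.congr fun x => ?_
  simp [Function.comp, eval_comp, Real.exp_neg, div_eq_mul_inv]

open Filter Topology in
lemma step_lemma (n : ℕ) (hn : 0 < n) (r : Fin n → ℝ) (hr : StrictAnti r)
    (h0 : r ⟨0, hn⟩ = 0) :
    ∃ s : Fin (n + 1) → ℝ, StrictAnti s ∧ s ⟨0, Nat.succ_pos n⟩ = 0 ∧
      (X + C (n : ℝ)) * (∏ i, (X - C (r i))) + X * (∏ i, (X - C (r i))).derivative
        = ∏ j, (X - C (s j)) := by
  set P : ℝ[X] := ∏ i, (X - C (r i)) with hP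
  set Q : ℝ[X] := (X + C (n : ℝ)) * P + X * P.derivative with hQ
  have hrle : ∀ i : Fin n, r i ≤ 0 := fun i =>
    h0 ▸ hr.antitone (show (⟨0, hn⟩ : Fin n) ≤ i by simp [Fin.le_def])
  have hPmonic : P.Monic := monic_prod_of_monic _ _ fun i _ => monic_X_sub_C _
  have hPdeg : P.natDegree = n := by
    rw [hP, natDegree_prod _ _ (fun i _ => X_sub_C_ne_zero _)]
    simp
  have hQeval : ∀ x : ℝ, Q.eval x = (x + n) * P.eval x + x * P.derivative.eval x := by
    intro x; simp [hQ]
  have hPr : ∀ i : Fin n, P.eval (r i) = 0 := by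
    intro i
    rw [hP, eval_prod]
    exact Finset.prod_eq_zero (Finset.mem_univ i) (by simp)
  set g : ℝ → ℝ := fun x => x ^ n * Real.exp x * P.eval x with hgdef
  have hg : ∀ x : ℝ, HasDerivAt g (x ^ (n - 1) * Real.exp x * Q.eval x) x := by
    intro x
    have h1 := ((hasDerivAt_pow n x).mul (Real.hasDerivAt_exp x)).mul (P.hasDerivAt x)
    refine h1.congr_deriv ?_
    rw [hQeval]
    obtain ⟨m, rfl⟩ : ∃ m, n = m + 1 := ⟨n - 1, by omega⟩
    simp only [Nat.add_sub_cancel, pow_succ, Pi.mul_apply]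
    push_cast
    ring
  have hgcont : Continuous g := ((continuous_pow n).mul Real.continuous_exp).mul P.continuous
  have hgr : ∀ i : Fin n, g (r i) = 0 := by intro i; simp [hgdef, hPr i]
  have hQroot : ∀ x : ℝ, x < 0 → x ^ (n - 1) * Real.exp x * Q.eval x = 0 → Q.eval x = 0 := by
    intro x hx h
    rcases mul_eq_zero.mp h with h' | h'
    · rcases mul_eq_zero.mp h' with h'' | h''
      · exact absurd h'' (pow_ne_zero _ (ne_of_lt hx))
      · exact absurd h'' (Real.exp_ne_zero x)
    · exact h'
  have hex : ∀ i : Fin n, ∃ cc : ℝ, Q.eval cc = 0 ∧ cc < r i ∧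
      ∀ (h : (i : ℕ) + 1 < n), r ⟨(i : ℕ) + 1, h⟩ < cc := by
    intro i
    by_cases hlt : (i : ℕ) + 1 < n
    · have hab : r ⟨(i : ℕ) + 1, hlt⟩ < r i := hr (by simp [Fin.lt_def])
      obtain ⟨cc, hcc, hder⟩ := exists_hasDerivAt_eq_zero
        (f' := fun x => x ^ (n - 1) * Real.exp x * Q.eval x) hab hgcont.continuousOn
        ((hgr ⟨(i : ℕ) + 1, hlt⟩).trans (hgr i).symm) (fun x _ => hg x)
      have hcb : cc < r i := hcc.2
      have hcneg : cc < 0 := lt_of_lt_of_le hcb (hrle i)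
      exact ⟨cc, hQroot cc hcneg hder, hcb, fun h => hcc.1⟩
    · set b := r i with hb
      have hbmin : ∀ j : Fin n, b ≤ r j := by
        intro j
        apply hr.antitone
        rw [Fin.le_def]
        have := j.isLt
        omega
      have hbneg : b ≤ 0 := hrle i
      have hgpos : ∀ x : ℝ, x < b → 0 < g x := by
        intro x hx
        have hxneg : x < 0 := lt_of_lt_of_le hx hbneg
        have hgx : g x = Real.exp x * ∏ j : Fin n, (x * (x - r j)) := by
          simp only [hgdef, hP, eval_prod, eval_sub, eval_X, eval_C,
            Finset.prod_mul_distrib, Finset.prod_const, Finset.card_univ, Fintype.card_fin]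
          ring
        rw [hgx]
        apply mul_pos (Real.exp_pos x)
        apply Finset.prod_pos
        intro j _
        exact mul_pos_of_neg_of_neg hxneg (by linarith [hbmin j])
      have htend : Tendsto g atBot (𝓝 0) := by
        refine (poly_mul_exp_tendsto_atBot (X ^ n * P)).congr fun x => ?_
        simp [hgdef]; ring
      have hgt : 0 < g (b - 1) := hgpos (b - 1) (by linarith)
      obtain ⟨M0, hM0⟩ := eventually_atBot.mp (htend.eventually_lt_const hgt)
      set M := min M0 (b - 2) with hM
      have hMt : M < b - 1 := by
        have : M ≤ b - 2 := min_le_right _ _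
        linarith
      have hMb : M < b := by linarith
      have hgM : g M < g (b - 1) := hM0 M (min_le_left _ _)
      obtain ⟨x0, hx0mem, hx0max⟩ := isCompact_Icc.exists_isMaxOn
        (Set.nonempty_Icc.mpr hMb.le) hgcont.continuousOn
      have hx0t : g (b - 1) ≤ g x0 := hx0max ⟨hMt.le, by linarith⟩
      have hx0M : x0 ≠ M := by
        intro h; rw [h] at hx0t; linarith
      have hx0b : x0 ≠ b := by
        intro h; rw [h, hb, hgr i] at hx0t; linarith
      have hx0in : x0 ∈ Set.Ioo M b :=
        ⟨lt_of_le_of_ne hx0mem.1 (Ne.symm hx0M), lt_of_le_of_ne hx0mem.2 hx0b⟩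
      have hloc : IsLocalMax g x0 := hx0max.isLocalMax (Icc_mem_nhds hx0in.1 hx0in.2)
      have hder := hloc.hasDerivAt_eq_zero (hg x0)
      have hx0neg : x0 < 0 := lt_of_lt_of_le hx0in.2 hbneg
      exact ⟨x0, hQroot _ hx0neg hder, hx0in.2, fun h => absurd h hlt⟩
  choose c hc1 hc2 hc3 using hex
  have hcneg : ∀ i, c i < 0 := fun i => lt_of_lt_of_le (hc2 i) (hrle i)
  have hcanti : StrictAnti c := by
    intro i j hij
    have hij' : (i : ℕ) < (j : ℕ) := hij
    have hlt : (i : ℕ) + 1 < n := by omega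
    calc c j < r j := hc2 j
      _ ≤ r ⟨(i : ℕ) + 1, hlt⟩ := hr.antitone (by simp [Fin.le_def]; omega)
      _ < c i := hc3 i hlt
  set s : Fin (n + 1) → ℝ :=
    fun j => if h : (j : ℕ) = 0 then 0 else c ⟨(j : ℕ) - 1, by omega⟩ with hs
  have hs0 : s ⟨0, Nat.succ_pos n⟩ = 0 := by simp [hs]
  have hsanti : StrictAnti s := by
    intro i j hij
    have hij' : (i : ℕ) < (j : ℕ) := hij
    rcases Nat.eq_zero_or_pos (i : ℕ) with hi0 | hi0
    · simp only [hs]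
      rw [dif_pos hi0, dif_neg (by omega)]
      exact hcneg _
    · simp only [hs]
      rw [dif_neg (by omega), dif_neg (by omega)]
      exact hcanti (show ((⟨(i : ℕ) - 1, by omega⟩ : Fin n)) < ⟨(j : ℕ) - 1, by omega⟩ by
        simp [Fin.lt_def]; omega)
  have hsQ : ∀ j : Fin (n + 1), Q.eval (s j) = 0 := by
    intro j
    rcases Nat.eq_zero_or_pos (j : ℕ) with hj0 | hj0
    · have : s j = 0 := by simp only [hs]; rw [dif_pos hj0]
      rw [this, hQeval]
      have hp0 := hPr ⟨0, hn⟩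
      rw [h0] at hp0
      rw [hp0]; ring
    · have : s j = c ⟨(j : ℕ) - 1, by omega⟩ := by
        simp only [hs]; rw [dif_neg (by omega)]
      rw [this]; exact hc1 _
  -- Q is monic of degree n + 1
  have hlead : ((X + C (n : ℝ)) * P).Monic := (monic_X_add_C _).mul hPmonic
  have hleaddeg : ((X + C (n : ℝ)) * P).natDegree = n + 1 := by
    rw [(monic_X_add_C _).natDegree_mul hPmonic, natDegree_X_add_C, hPdeg, add_comm]
  have h1 : (X * P.derivative).natDegree ≤ n := by
    refine le_trans natDegree_mul_le ?_
    have h2 := natDegree_derivative_le P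
    rw [natDegree_X]
    omega
  have hsmalldeg : (X * P.derivative).degree < ((X + C (n : ℝ)) * P).degree := by
    rw [degree_eq_natDegree hlead.ne_zero, hleaddeg]
    calc (X * P.derivative).degree ≤ ((X * P.derivative).natDegree : WithBot ℕ) :=
          degree_le_natDegree
      _ ≤ (n : WithBot ℕ) := by exact_mod_cast h1
      _ < ((n + 1 : ℕ) : WithBot ℕ) := by exact_mod_cast lt_add_one n
  have hQmonic : Q.Monic := hlead.add_of_left hsmalldeg
  have hQdeg : Q.natDegree = n + 1 :=
    (natDegree_eq_of_degree_eq (degree_add_eq_left_of_degree_lt hsmalldeg)).trans hleaddeg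
  set R : ℝ[X] := ∏ j, (X - C (s j)) with hR
  have hRmonic : R.Monic := monic_prod_of_monic _ _ fun i _ => monic_X_sub_C _
  have hRdeg : R.natDegree = n + 1 := by
    rw [hR, natDegree_prod _ _ (fun i _ => X_sub_C_ne_zero _)]
    simp
  have hfin : Q - R = 0 := by
    rcases eq_or_ne (Q - R) 0 with h | h
    · exact h
    · apply Polynomial.eq_zero_of_natDegree_lt_card_of_eval_eq_zero _ hsanti.injective
      · intro j
        have hRj : R.eval (s j) = 0 := by
          rw [hR, eval_prod]
          exact Finset.prod_eq_zero (Finset.mem_univ j) (by simp)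
        rw [eval_sub, hsQ j, hRj, sub_zero]
      · rw [Fintype.card_fin]
        have hdeg : (Q - R).degree < ((n + 1 : ℕ) : WithBot ℕ) := by
          have hdeq : Q.degree = R.degree := by
            rw [degree_eq_natDegree hQmonic.ne_zero, hQdeg,
              degree_eq_natDegree hRmonic.ne_zero, hRdeg]
          have hlc : Q.leadingCoeff = R.leadingCoeff := by
            rw [hQmonic.leadingCoeff, hRmonic.leadingCoeff]
          have hd := degree_sub_lt hdeq hQmonic.ne_zero hlc
          rwa [degree_eq_natDegree hQmonic.ne_zero, hQdeg] at hd
        exact (natDegree_lt_iff_degree_lt h).mpr hdeg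
  exact ⟨s, hsanti, hs0, sub_eq_zero.mp hfin⟩

lemma main_lemma (n : ℕ) (hn : 1 ≤ n) :
    ∃ r : Fin n → ℝ, StrictAnti r ∧ r ⟨0, hn⟩ = 0 ∧ LP n = ∏ i, (X - C (r i)) := by
  induction n, hn using Nat.le_induction with
  | base =>
    refine ⟨fun _ => 0, ?_, rfl, ?_⟩
    · intro i j hij
      exact absurd (Subsingleton.elim i j ▸ hij) (lt_irrefl _)
    · rw [LP]
      have h11 : lahNum 1 1 = 1 := rfl
      simp [h11]
  | succ m hm ih =>
    obtain ⟨r, hr, h0, hLP⟩ := ih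
    obtain ⟨s, hs, hs0, hQ⟩ := step_lemma m hm r hr h0
    exact ⟨s, hs, hs0, by rw [LP_rec m hm, hLP, hQ]⟩

/-- For `n ≥ 1`, the Lah polynomial `L_n(x) = ∑_{k=1}^n L(n,k) x^k` has only real zeros. -/
theorem lah_polynomial_real_rooted (n : ℕ) (hn : 1 ≤ n) :
    RZ (∑ k ∈ Finset.Icc 1 n, Polynomial.C (lahNum n k : ℝ) * Polynomial.X ^ k) := by
  obtain ⟨r, hr, h0, hLP⟩ := main_lemma n hn
  intro z hz
  have hEq : (∑ k ∈ Finset.Icc 1 n, Polynomial.C (lahNum n k : ℝ) * Polynomial.X ^ k) = LP n :=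
    rfl
  rw [hEq, hLP] at hz
  simp only [Polynomial.map_prod, Polynomial.map_sub, Polynomial.map_X, Polynomial.map_C,
    IsRoot, eval_prod] at hz
  obtain ⟨i, -, hi⟩ := Finset.prod_eq_zero_iff.mp hz
  simp only [eval_sub, eval_X, eval_C, sub_eq_zero] at hi
  rw [hi]
  simp
end

section
/- For n ≥ 1 and r ≥ 0, the polynomial x^r ( x·B_{n−1,r}(x) + r·B_{n−1,r−1}(x) ) has only real zeros, where B_{m,s}(x) denotes the s-Bell polynomial (and the term r·B_{n−1,r−1} is omitted when r = 0). -/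
/-- `rStirlingShift r m k = S_r(m + r, k + r)`, the `r`-Stirling numbers of the second
kind (shifted indexing), via the recurrence `S_r(m+1+r, k+r) = (k+r) S_r(m+r, k+r) +
S_r(m+r, k-1+r)` with `S_r(r, k+r) = δ_{k,0}`. -/
def rStirlingShift (r : ℕ) : ℕ → ℕ → ℕ
  | 0, 0 => 1
  | 0, _ + 1 => 0
  | m + 1, k =>
      (k + r) * rStirlingShift r m k +
        (match k with
          | 0 => 0
          | k' + 1 => rStirlingShift r m k')

/-- The `r`-Bell polynomial `B_{m,r}(x) = ∑_{k=0}^m S_r(m+r, k+r) x^k`. -/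
noncomputable def rBellPoly (r m : ℕ) : Polynomial ℝ :=
  ∑ k ∈ Finset.range (m + 1), Polynomial.C (rStirlingShift r m k : ℝ) * Polynomial.X ^ k

section AuxProofs
open Polynomial Filter

lemma stir_succ_succ (r m k : ℕ) :
    rStirlingShift r (m+1) (k+1) = (k+1+r) * rStirlingShift r m (k+1) + rStirlingShift r m k := rfl

lemma stir_succ_zero (r m : ℕ) :
    rStirlingShift r (m+1) 0 = r * rStirlingShift r m 0 := by
  show (0 + r) * _ + 0 = _
  ring

lemma stir_eq_zero (r : ℕ) : ∀ m k, m < k → rStirlingShift r m k = 0 := by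
  intro m
  induction m with
  | zero => intro k hk; cases k with
    | zero => omega
    | succ k => rfl
  | succ m ih =>
    intro k hk
    cases k with
    | zero => omega
    | succ k =>
      rw [stir_succ_succ, ih (k+1) (by omega), ih k (by omega)]
      simp

lemma coeff_rBellPoly (r m k : ℕ) :
    (rBellPoly r m).coeff k = (rStirlingShift r m k : ℝ) := by
  rw [rBellPoly, finset_sum_coeff]
  simp only [coeff_C_mul, coeff_X_pow]
  rw [Finset.sum_eq_single k]
  · simp
  · intro b _ hb; simp [Ne.symm hb]
  · intro h
    simp only [Finset.mem_range, not_lt] at h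
    rw [stir_eq_zero r m k (by omega)]
    simp

lemma stir_derivative (s : ℕ) : ∀ m k, rStirlingShift (s+1) m k
    = rStirlingShift s m k + (k+1) * rStirlingShift s m (k+1) := by
  intro m
  induction m with
  | zero =>
    intro k
    cases k with
    | zero => simp [rStirlingShift, stir_eq_zero s 0 1 (by omega)]
    | succ k =>
      rw [stir_eq_zero (s+1) 0 (k+1) (by omega), stir_eq_zero s 0 (k+1) (by omega),
        stir_eq_zero s 0 (k+2) (by omega)]
      simp
  | succ m ih =>
    intro k
    cases k with
    | zero => simp only [stir_succ_zero, stir_succ_succ, ih]; ring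
    | succ k => simp only [stir_succ_succ, ih]; ring

lemma stir_zero_succ_zero (m : ℕ) : rStirlingShift 0 (m+1) 0 = 0 := by
  induction m with
  | zero => rfl
  | succ m ih => rw [stir_succ_zero]; omega

lemma stir_zero_one : ∀ m k, rStirlingShift 0 (m+1) (k+1) = rStirlingShift 1 m k := by
  intro m
  induction m with
  | zero =>
    intro k
    cases k with
    | zero => rfl
    | succ k =>
      rw [stir_succ_succ, stir_eq_zero 0 0 (k+2) (by omega), stir_eq_zero 0 0 (k+1) (by omega),
        stir_eq_zero 1 0 (k+1) (by omega)]
      simp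
  | succ m ih =>
    intro k
    cases k with
    | zero =>
      rw [stir_succ_succ 0 (m+1) 0, ih 0, stir_zero_succ_zero, stir_succ_zero]
      ring
    | succ k =>
      rw [stir_succ_succ 0 (m+1) (k+1), ih (k+1), ih k, stir_succ_succ 1 m k]

-- the three polynomial identities
lemma rBell_rec (s m : ℕ) : rBellPoly s (m+1)
    = (X + C (s:ℝ)) * rBellPoly s m + X * derivative (rBellPoly s m) := by
  ext k
  cases k with
  | zero =>
    simp only [add_mul, coeff_add, coeff_C_mul, coeff_derivative, coeff_rBellPoly,
      coeff_X_mul_zero, coeff_mul_X_zero, X_mul]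
    rw [stir_succ_zero]
    push_cast
    ring
  | succ k =>
    simp only [add_mul, coeff_add, coeff_C_mul, X_mul, coeff_mul_X, coeff_derivative,
      coeff_rBellPoly]
    rw [stir_succ_succ]
    push_cast
    ring

lemma rBell_derivative (s m : ℕ) :
    rBellPoly (s+1) m = rBellPoly s m + derivative (rBellPoly s m) := by
  ext k
  rw [coeff_add, coeff_rBellPoly, coeff_rBellPoly, coeff_derivative, coeff_rBellPoly,
    stir_derivative]
  push_cast
  ring

lemma rBell_zero_eq (m : ℕ) : rBellPoly 0 (m+1) = X * rBellPoly 1 m := by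
  ext k
  rw [coeff_rBellPoly]
  cases k with
  | zero => rw [coeff_X_mul_zero, stir_zero_succ_zero]; simp
  | succ k => rw [coeff_X_mul, coeff_rBellPoly, stir_zero_one]

lemma rBell_zero_zero : rBellPoly 0 0 = 1 := by
  ext k
  rw [coeff_rBellPoly]
  cases k with
  | zero => simp [rStirlingShift]
  | succ k => rw [stir_eq_zero 0 0 (k+1) (by omega)]; simp [Polynomial.coeff_one]

lemma rBell_self_zero (s : ℕ) : rBellPoly s 0 = 1 := by
  ext k
  rw [coeff_rBellPoly]
  cases k with
  | zero =>
    cases s with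
    | zero => simp [rStirlingShift]
    | succ s => simp [rStirlingShift]
  | succ k => rw [stir_eq_zero s 0 (k+1) (by omega)]; simp [Polynomial.coeff_one]

lemma exists_far_left (d : ℕ) (hd : 0 < d) (T : Polynomial ℝ) (hT : T.Monic)
    (hdeg : T.natDegree = d) (b : ℝ) :
    ∃ M, M < b ∧ 0 < (-1:ℝ)^d * T.eval M := by
  set U := T.comp (-X) with hU
  have hX : ((-X : Polynomial ℝ)).natDegree = 1 := by simp
  have hdU : U.natDegree = d := by
    rw [hU, natDegree_comp, hX, hdeg, mul_one]
  have hlU : U.leadingCoeff = (-1)^d := by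
    rw [hU, leadingCoeff_comp (by rw [hX]; omega)]
    simp [hT.leadingCoeff, hdeg]
  set V := C ((-1:ℝ)^d) * U with hV
  have hc : ((-1:ℝ)^d) ≠ 0 := by
    intro h
    have := pow_ne_zero d (by norm_num : (-1:ℝ) ≠ 0)
    exact this h
  have hdV : V.natDegree = d := by
    rw [hV, natDegree_C_mul hc, hdU]
  have hlV : V.leadingCoeff = 1 := by
    rw [hV, leadingCoeff_mul, leadingCoeff_C, hlU, ← mul_pow]
    norm_num
  have hV0 : V ≠ 0 := fun h => by simp [h] at hlV
  have htend : Tendsto (fun y => V.eval y) atTop atTop := by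
    apply Polynomial.tendsto_atTop_of_leadingCoeff_nonneg
    · rw [degree_eq_natDegree hV0, hdV]
      exact_mod_cast hd
    · rw [hlV]; norm_num
  obtain ⟨y, hy1, hy2⟩ := ((htend.eventually_gt_atTop 0).and (eventually_gt_atTop (-b))).exists
  refine ⟨-y, by linarith, ?_⟩
  have : V.eval y = (-1)^d * T.eval (-y) := by
    rw [hV, hU]
    simp [eval_comp]
  linarith [this ▸ hy1]

lemma key (d : ℕ) (hd : 0 < d) (T : Polynomial ℝ) (hT : T.Monic) (hdeg : T.natDegree = d)
    (x : ℕ → ℝ) (hx : ∀ i j, i < j → j < d → x i < x j)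
    (hsign : ∀ i, i < d → 0 < (-1:ℝ)^(d - 1 - i) * T.eval (x i)) :
    ∃ ρ : ℕ → ℝ, (∀ i j, i < j → j < d → ρ i < ρ j) ∧ (∀ i, i < d → ρ i < x (d-1)) ∧
      T = ∏ i ∈ Finset.range d, (X - C (ρ i)) := by
  obtain ⟨M, hM0, hMs⟩ := exists_far_left d hd T hT hdeg (x 0)
  set P : ℕ → ℝ := fun i => if i = 0 then M else x (i-1) with hP
  have hPsign : ∀ i, i ≤ d → 0 < (-1:ℝ)^(d - i) * T.eval (P i) := by
    intro i hi
    cases i with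
    | zero => simpa [hP] using hMs
    | succ i =>
      have := hsign i (by omega)
      have h2 : d - (i+1) = d - 1 - i := by omega
      simpa [hP, h2] using this
  have hProots : ∀ i, ∃ c, i < d → c ∈ Set.Ioo (P i) (P (i+1)) ∧ T.eval c = 0 := by
    intro i
    by_cases hi : i < d
    · have hlt : P i < P (i+1) := by
        cases i with
        | zero =>
          simp only [hP]
          norm_num
          exact hM0
        | succ i =>
          simp only [hP]
          norm_num
          exact hx i (i+1) (by omega) (by omega)
      have h1 := hPsign i (by omega)
      have h2 := hPsign (i+1) (by omega)
      have hde : d - i = (d - (i+1)) + 1 := by omega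
      have hcont : ContinuousOn (fun y => T.eval y) (Set.Icc (P i) (P (i+1))) :=
        (Polynomial.continuous T).continuousOn
      rcases Nat.even_or_odd (d - i) with he | ho
      · -- (-1)^(d-i) = 1, so T (P i) > 0; (-1)^(d-i-1) = -1, T (P (i+1)) < 0
        rw [he.neg_one_pow, one_mul] at h1
        have ho' : Odd (d - (i+1)) := by
          rcases Nat.even_or_odd (d - (i+1)) with h | h
          · exfalso
            have : Odd (d - i) := by rw [hde]; exact Even.add_one h
            exact (Nat.not_odd_iff_even.mpr he) this
          · exact h
        rw [ho'.neg_one_pow] at h2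
        have h2' : T.eval (P (i+1)) < 0 := by linarith
        have := intermediate_value_Ioo' (le_of_lt hlt) hcont
          (by constructor <;> assumption : (0:ℝ) ∈ Set.Ioo (T.eval (P (i+1))) (T.eval (P i)))
        obtain ⟨c, hc1, hc2⟩ := this
        exact ⟨c, fun _ => ⟨hc1, hc2⟩⟩
      · rw [ho.neg_one_pow] at h1
        have h1' : T.eval (P i) < 0 := by linarith
        have he' : Even (d - (i+1)) := by
          rcases Nat.even_or_odd (d - (i+1)) with h | h
          · exact h
          · exfalso
            have : Even (d - i) := by rw [hde]; exact Odd.add_one h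
            exact (Nat.not_even_iff_odd.mpr ho) this
        rw [he'.neg_one_pow, one_mul] at h2
        have := intermediate_value_Ioo (le_of_lt hlt) hcont
          (by constructor <;> assumption : (0:ℝ) ∈ Set.Ioo (T.eval (P i)) (T.eval (P (i+1))))
        obtain ⟨c, hc1, hc2⟩ := this
        exact ⟨c, fun _ => ⟨hc1, hc2⟩⟩
    · exact ⟨0, fun h => absurd h hi⟩
  choose ρ hρ using hProots
  have hPmono : ∀ i j, i ≤ j → j ≤ d → P i ≤ P j := by
    intro i j hij hjd
    rcases eq_or_lt_of_le hij with rfl | hij'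
    · exact le_refl _
    · cases i with
      | zero =>
        cases j with
        | zero => omega
        | succ j =>
          simp only [hP]
          norm_num
          have : x 0 ≤ x j := by
            rcases Nat.eq_zero_or_pos j with rfl | hj
            · exact le_refl _
            · exact le_of_lt (hx 0 j hj (by omega))
          linarith
      | succ i =>
        cases j with
        | zero => omega
        | succ j =>
          simp only [hP]
          norm_num
          exact le_of_lt (hx i j (by omega) (by omega))
  have hρmono : ∀ i j, i < j → j < d → ρ i < ρ j := by
    intro i j hij hjd
    have h1 := (hρ i (by omega)).1
    have h2 := (hρ j hjd).1
    have : P (i+1) ≤ P j := hPmono (i+1) j (by omega) (by omega)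
    exact lt_of_lt_of_le h1.2 (le_trans this (le_of_lt h2.1))
  have hρlt : ∀ i, i < d → ρ i < x (d-1) := by
    intro i hi
    have h1 := (hρ i hi).1
    have : P (i+1) ≤ P d := hPmono (i+1) d (by omega) (le_refl d)
    have hPd : P d = x (d-1) := by simp only [hP]; rw [if_neg (by omega)]
    calc ρ i < P (i+1) := h1.2
    _ ≤ P d := this
    _ = x (d-1) := hPd
  refine ⟨ρ, hρmono, hρlt, ?_⟩
  -- product equality
  set Q : Polynomial ℝ := ∏ i ∈ Finset.range d, (X - C (ρ i)) with hQ
  have hQm : Q.Monic := monic_prod_of_monic _ _ (fun i _ => monic_X_sub_C _)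
  have hQd : Q.natDegree = d := by
    rw [hQ, natDegree_prod _ _ (fun i _ => X_sub_C_ne_zero _)]
    simp
  by_contra hne
  have hsub : T - Q ≠ 0 := fun h => hne (sub_eq_zero.mp h)
  have hdeglt : (T - Q).natDegree < d := by
    have h1 : T.degree = Q.degree := by
      rw [degree_eq_natDegree hT.ne_zero, degree_eq_natDegree hQm.ne_zero, hdeg, hQd]
    have h2 : T.leadingCoeff = Q.leadingCoeff := by rw [hT.leadingCoeff, hQm.leadingCoeff]
    have := degree_sub_lt h1 hT.ne_zero h2
    rw [degree_eq_natDegree hT.ne_zero, hdeg] at this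
    exact_mod_cast (natDegree_lt_iff_degree_lt hsub).mpr this
  have : T - Q = 0 := by
    apply eq_zero_of_natDegree_lt_card_of_eval_eq_zero' _ ((Finset.range d).image ρ)
    · intro y hy
      obtain ⟨i, hi, rfl⟩ := Finset.mem_image.mp hy
      rw [Finset.mem_range] at hi
      have hT0 : T.eval (ρ i) = 0 := (hρ i hi).2
      have hQ0 : Q.eval (ρ i) = 0 := by
        rw [hQ, eval_prod]
        apply Finset.prod_eq_zero (Finset.mem_range.mpr hi)
        simp
      simp [hT0, hQ0]
    · rw [Finset.card_image_of_injOn]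
      · simpa using hdeglt
      · intro i hi j hj hij
        rw [Finset.mem_coe, Finset.mem_range] at hi hj
        by_contra hne'
        rcases lt_or_gt_of_ne hne' with h | h
        · exact absurd hij (ne_of_lt (hρmono i j h hj))
        · exact absurd hij.symm (ne_of_lt (hρmono j i h hi))
  exact hsub this

lemma step (k : ℕ) (a : ℕ → ℝ) (ha : ∀ i j, i < j → j < k → a i < a j)
    (hneg : ∀ i, i < k → a i < 0) (c : ℝ) (hc : 0 < c) :
    ∃ ρ : ℕ → ℝ, (∀ i j, i < j → j < k+1 → ρ i < ρ j) ∧ (∀ i, i < k+1 → ρ i < 0) ∧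
      (X + C c) * (∏ i ∈ Finset.range k, (X - C (a i)))
        + X * derivative (∏ i ∈ Finset.range k, (X - C (a i)))
        = ∏ i ∈ Finset.range (k+1), (X - C (ρ i)) := by
  set D : Polynomial ℝ := ∏ i ∈ Finset.range k, (X - C (a i)) with hD
  have hDm : D.Monic := monic_prod_of_monic _ _ (fun i _ => monic_X_sub_C _)
  have hDd : D.natDegree = k := by
    rw [hD, natDegree_prod _ _ (fun i _ => X_sub_C_ne_zero _)]
    simp
  set T : Polynomial ℝ := (X + C c) * D + X * derivative D with hT
  have hAm : ((X + C c) * D).Monic := (monic_X_add_C c).mul hDm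
  have hAd : ((X + C c) * D).natDegree = k + 1 := by
    rw [(monic_X_add_C c).natDegree_mul hDm, natDegree_X_add_C, hDd]
    omega
  have hBdeg : (X * derivative D).degree < ((X + C c) * D).degree := by
    rw [degree_eq_natDegree hAm.ne_zero, hAd]
    by_cases hD0 : derivative D = 0
    · rw [hD0, mul_zero, degree_zero]
      exact WithBot.bot_lt_coe _
    · have hk1 : 1 ≤ k := by
        by_contra hk
        have : k = 0 := by omega
        subst this
        rw [hD, Finset.range_zero, Finset.prod_empty] at hD0
        simp at hD0
      have h1 : (X * derivative D).natDegree ≤ 1 + (k - 1) := by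
        refine le_trans (natDegree_mul_le) ?_
        have := natDegree_derivative_le D
        rw [hDd] at this
        simpa using add_le_add_left this 1
      have h2 : (X * derivative D).natDegree < k + 1 := by omega
      exact lt_of_le_of_lt (degree_le_natDegree) (by exact_mod_cast h2)
  have hTm : T.Monic := hAm.add_of_left hBdeg
  have hTd : T.natDegree = k + 1 := by
    rw [hT, natDegree_add_eq_left_of_degree_lt hBdeg, hAd]
  have hDeval : ∀ i, i < k → D.eval (a i) = 0 := by
    intro i hi
    rw [hD, eval_prod]
    apply Finset.prod_eq_zero (Finset.mem_range.mpr hi)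
    simp
  have hD'eval : ∀ i, i < k →
      (derivative D).eval (a i) = ∏ j ∈ (Finset.range k).erase i, (a i - a j) := by
    intro i hi
    have hsplit : D = (X - C (a i)) * ∏ j ∈ (Finset.range k).erase i, (X - C (a j)) := by
      rw [hD]
      exact (Finset.mul_prod_erase (Finset.range k) (fun j => X - C (a j))
        (Finset.mem_range.mpr hi)).symm
    rw [hsplit, derivative_mul, derivative_sub, derivative_X, derivative_C, sub_zero, one_mul]
    rw [eval_add, eval_mul]
    simp only [eval_sub, eval_X, eval_C, sub_self, zero_mul, add_zero]
    rw [eval_prod]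
    simp
  have hprodsign : ∀ i, i < k →
      0 < (-1:ℝ)^(k - 1 - i) * ∏ j ∈ (Finset.range k).erase i, (a i - a j) := by
    intro i hi
    have herase : (Finset.range k).erase i = Finset.range i ∪ Finset.Ico (i+1) k := by
      ext j
      simp only [Finset.mem_erase, Finset.mem_range, Finset.mem_union, Finset.mem_Ico]
      omega
    rw [herase, Finset.prod_union (by
      simp only [Finset.disjoint_left, Finset.mem_range, Finset.mem_Ico]
      omega)]
    have hpos : 0 < ∏ j ∈ Finset.range i, (a i - a j) := by
      apply Finset.prod_pos
      intro j hj
      rw [Finset.mem_range] at hj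
      have := ha j i hj hi
      linarith
    have hrw : ∏ j ∈ Finset.Ico (i+1) k, (a i - a j)
        = (-1:ℝ)^(k - 1 - i) * ∏ j ∈ Finset.Ico (i+1) k, (a j - a i) := by
      rw [Finset.prod_congr rfl (fun j _ => by ring : ∀ j ∈ Finset.Ico (i+1) k,
        (a i - a j) = (-1) * (a j - a i)), Finset.prod_mul_distrib, Finset.prod_const,
        Nat.card_Ico]
      congr 2
      omega
    have hpos2 : 0 < ∏ j ∈ Finset.Ico (i+1) k, (a j - a i) := by
      apply Finset.prod_pos
      intro j hj
      rw [Finset.mem_Ico] at hj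
      have := ha i j (by omega) (by omega)
      linarith
    have hAA : (-1:ℝ)^(k-1-i) * (-1:ℝ)^(k-1-i) = 1 := by
      rw [← mul_pow]; norm_num
    have key0 : (-1:ℝ)^(k-1-i) * ((∏ j ∈ Finset.range i, (a i - a j)) *
        ∏ j ∈ Finset.Ico (i+1) k, (a i - a j))
        = (∏ j ∈ Finset.range i, (a i - a j)) * ∏ j ∈ Finset.Ico (i+1) k, (a j - a i) := by
      calc (-1:ℝ)^(k-1-i) * ((∏ j ∈ Finset.range i, (a i - a j)) *
          ∏ j ∈ Finset.Ico (i+1) k, (a i - a j))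
          = ((-1:ℝ)^(k-1-i) * (-1:ℝ)^(k-1-i)) * ((∏ j ∈ Finset.range i, (a i - a j)) *
            ∏ j ∈ Finset.Ico (i+1) k, (a j - a i)) := by rw [hrw]; ring
        _ = (∏ j ∈ Finset.range i, (a i - a j)) * ∏ j ∈ Finset.Ico (i+1) k, (a j - a i) := by
            rw [hAA, one_mul]
    rw [key0]
    exact mul_pos hpos hpos2
  -- now apply key
  set x : ℕ → ℝ := fun i => if i < k then a i else 0 with hx
  have hxmono : ∀ i j, i < j → j < k+1 → x i < x j := by
    intro i j hij hj
    simp only [hx]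
    by_cases hjk : j < k
    · rw [if_pos (by omega), if_pos hjk]
      exact ha i j hij hjk
    · rw [if_pos (by omega), if_neg hjk]
      exact hneg i (by omega)
  have hsign : ∀ i, i < k + 1 → 0 < (-1:ℝ)^(k + 1 - 1 - i) * T.eval (x i) := by
    intro i hi
    by_cases hik : i < k
    · have hxi : x i = a i := by simp only [hx]; rw [if_pos hik]
      have hTeval : T.eval (a i) = a i * ∏ j ∈ (Finset.range k).erase i, (a i - a j) := by
        rw [hT, eval_add, eval_mul, eval_mul, hDeval i hik, mul_zero, zero_add, eval_X,
          hD'eval i hik]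
      rw [hxi, hTeval]
      have h1 := hprodsign i hik
      have h2 := hneg i hik
      have hsplit2 : (k + 1 - 1 - i) = (k - 1 - i) + 1 := by omega
      rw [hsplit2, pow_succ]
      calc (0:ℝ) < ((-1:ℝ)^(k-1-i) * ∏ j ∈ (Finset.range k).erase i, (a i - a j)) * (-a i) :=
            mul_pos h1 (by linarith)
        _ = (-1:ℝ)^(k-1-i) * (-1) * (a i * ∏ j ∈ (Finset.range k).erase i, (a i - a j)) := by
            ring
    · have hik' : i = k := by omega
      have hxk : x i = 0 := by simp only [hx]; rw [if_neg (by omega)]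
      have hD0 : 0 < D.eval 0 := by
        rw [hD, eval_prod]
        apply Finset.prod_pos
        intro j hj
        rw [Finset.mem_range] at hj
        have := hneg j hj
        simp only [eval_sub, eval_X, eval_C]
        linarith
      have hTeval : T.eval 0 = c * D.eval 0 := by
        rw [hT]
        simp
      rw [hxk, hTeval]
      have : k + 1 - 1 - i = 0 := by omega
      rw [this, pow_zero, one_mul]
      exact mul_pos hc hD0
  obtain ⟨ρ, h1, h2, h3⟩ := key (k+1) (by omega) T hTm hTd x hxmono hsign
  refine ⟨ρ, h1, ?_, h3⟩
  intro i hi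
  have := h2 i hi
  have hxk : x (k+1-1) = 0 := by simp only [hx]; rw [if_neg (by omega)]
  rw [hxk] at this
  exact this

lemma rBell_struct (s m : ℕ) (hs : 1 ≤ s) :
    ∃ a : ℕ → ℝ, (∀ i j, i < j → j < m → a i < a j) ∧ (∀ i, i < m → a i < 0) ∧
      rBellPoly s m = ∏ i ∈ Finset.range m, (X - C (a i)) := by
  induction m with
  | zero =>
    refine ⟨fun _ => 0, by omega, by omega, ?_⟩
    rw [rBell_self_zero]
    simp
  | succ m ih =>
    obtain ⟨a, h1, h2, h3⟩ := ih
    obtain ⟨ρ, g1, g2, g3⟩ := step m a h1 h2 (s:ℝ) (by exact_mod_cast hs)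
    exact ⟨ρ, g1, g2, by rw [rBell_rec, h3]; exact g3⟩

lemma RZ_of_splits (p : Polynomial ℝ) (hp : p ≠ 0) (h : p.Splits) : RZ p := by
  intro z hz
  have hmap : p.map (algebraMap ℝ ℂ) ≠ 0 := by
    simpa using (Polynomial.map_ne_zero_iff (algebraMap ℝ ℂ).injective).mpr hp
  have hz' : z ∈ (p.map (algebraMap ℝ ℂ)).roots := by
    rw [mem_roots hmap]
    exact hz
  rw [h.roots_map] at hz'
  obtain ⟨y, _, rfl⟩ := Multiset.mem_map.mp hz'
  simp

lemma RZ_prod_form (e : ℕ) (d : ℕ) (ρ : ℕ → ℝ) :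
    RZ ((X:Polynomial ℝ)^e * ∏ i ∈ Finset.range d, (X - C (ρ i))) := by
  apply RZ_of_splits
  · apply mul_ne_zero (pow_ne_zero _ X_ne_zero)
    exact (monic_prod_of_monic _ _ (fun i _ => monic_X_sub_C _)).ne_zero
  · apply Splits.mul
    · exact Splits.pow Splits.X _
    · exact Splits.prod (fun i _ => Splits.X_sub_C _)


end AuxProofs

open Polynomial Filter in
/-- For `n ≥ 1` and `r ≥ 0`, the polynomial
`x^r (x · B_{n−1,r}(x) + r · B_{n−1,r−1}(x))` has only real zeros
(the second summand vanishes when `r = 0`). -/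
theorem sigma_tree_union_complete_real_rooted (n r : ℕ) (hn : 1 ≤ n) :
    RZ (Polynomial.X ^ r *
      (Polynomial.X * rBellPoly r (n - 1) +
        Polynomial.C (r : ℝ) * rBellPoly (r - 1) (n - 1))) := by
  set m := n - 1 with hm
  rcases Nat.eq_zero_or_pos r with rfl | hr
  · -- r = 0
    have hsimp : (X:Polynomial ℝ)^0 * (X * rBellPoly 0 m + C ((0:ℕ):ℝ) * rBellPoly (0-1) m)
        = X * rBellPoly 0 m := by
      simp
    rw [hsimp]
    cases m with
    | zero =>
      rw [rBell_self_zero, mul_one]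
      have : (X : Polynomial ℝ) = X^1 * ∏ i ∈ Finset.range 0, (X - C ((fun _ => (0:ℝ)) i)) := by
        simp
      rw [this]
      exact RZ_prod_form 1 0 _
    | succ m' =>
      obtain ⟨a, h1, h2, h3⟩ := rBell_struct 1 m' (le_refl 1)
      rw [rBell_zero_eq, h3, ← mul_assoc, ← sq]
      exact RZ_prod_form 2 m' a
  · -- r ≥ 1
    have hr1 : r - 1 + 1 = r := by omega
    have hder := rBell_derivative (r-1) m
    rw [hr1] at hder
    have hinner : X * rBellPoly r m + C (r:ℝ) * rBellPoly (r-1) m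
        = (X + C (r:ℝ)) * rBellPoly (r-1) m + X * derivative (rBellPoly (r-1) m) := by
      rw [hder]; ring
    rw [hinner]
    rcases Nat.lt_or_ge r 2 with hr2 | hr2
    · -- r = 1
      have hreq : r = 1 := by omega
      subst hreq
      simp only [show (1:ℕ) - 1 = 0 from rfl, Nat.cast_one]
      cases m with
      | zero =>
        rw [rBell_self_zero]
        have : (X:Polynomial ℝ)^1 * ((X + C (1:ℝ)) * 1 + X * derivative (1:Polynomial ℝ))
            = X^1 * ∏ i ∈ Finset.range 1, (X - C ((fun _ => (-1:ℝ)) i)) := by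
          simp
        rw [this]
        exact RZ_prod_form 1 1 _
      | succ m' =>
        obtain ⟨a, h1, h2, h3⟩ := rBell_struct 1 m' (le_refl 1)
        obtain ⟨ρ, g1, g2, g3⟩ := step m' a h1 h2 (2:ℝ) (by norm_num)
        have hBD : rBellPoly 0 (m'+1) = X * rBellPoly 1 m' := rBell_zero_eq m'
        have hxpand : (X + C (1:ℝ)) * rBellPoly 0 (m'+1) + X * derivative (rBellPoly 0 (m'+1))
            = X * ((X + C (2:ℝ)) * rBellPoly 1 m' + X * derivative (rBellPoly 1 m')) := by
          rw [hBD, derivative_mul, derivative_X,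
            show (C (2:ℝ)) = C 1 + C 1 by rw [show (2:ℝ) = 1 + 1 by norm_num, map_add], C_1]
          ring
        rw [hxpand, h3, g3, ← mul_assoc]
        have : (X:Polynomial ℝ)^1 * X = X^2 := by ring
        rw [this]
        exact RZ_prod_form 2 (m'+1) ρ
    · -- r ≥ 2
      obtain ⟨a, h1, h2, h3⟩ := rBell_struct (r-1) m (by omega)
      obtain ⟨ρ, g1, g2, g3⟩ := step m a h1 h2 (r:ℝ) (by exact_mod_cast hr)
      rw [h3, g3]
      exact RZ_prod_form r (m+1) ρ
end

section
/- Let h(t) = Σ_{j≥1} a_j t^j/j! be a real power series and define polynomials A_n(x) by 1 + Σ_{n≥1} A_n(x) t^n/n! = exp(x h(t)). Let A_n^{(1)}(x) := e^{-x} Σ_{j≥0} A_n(j) x^j/j! (the evaluation of A_n at the Bell umbra). Then 1 + Σ_{n≥1} A_n^{(1)}(x) t^n/n! = exp( x Σ_{j≥1} A_j(1) t^j/j! ). -/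
/-- The formal power series `h(t) = ∑_{j ≥ 1} a_j t^j / j!`. -/
noncomputable def hSeries (a : ℕ → ℝ) : PowerSeries ℝ :=
  PowerSeries.mk fun j => if j = 0 then 0 else a j / (j.factorial : ℝ)

/-- The polynomial family `A_n(x)` defined by `1 + ∑_{n ≥ 1} A_n(x) t^n/n! = exp(x h(t))`:
`A_n(x) = n! ∑_{k=0}^n (x^k/k!) · [t^n] h(t)^k`. -/
noncomputable def Apoly (a : ℕ → ℝ) (n : ℕ) (x : ℝ) : ℝ :=
  (n.factorial : ℝ) * ∑ k ∈ Finset.range (n + 1),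
    x ^ k / (k.factorial : ℝ) * PowerSeries.coeff n ((hSeries a) ^ k)

/-- The Bell-umbral evaluation `A_n^{(1)}(x) = e^{-x} ∑_{j ≥ 0} A_n(j) x^j / j!`. -/
noncomputable def AumbralEval (a : ℕ → ℝ) (n : ℕ) (x : ℝ) : ℝ :=
  Real.exp (-x) * ∑' j : ℕ, Apoly a n j * x ^ j / (j.factorial : ℝ)

open PowerSeries Finset

namespace UmbralAux

lemma hconst (a : ℕ → ℝ) : constantCoeff (hSeries a) = 0 := by
  simp [hSeries, ← coeff_zero_eq_constantCoeff_apply]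

lemma coeff_pow_zero_of_lt {f : PowerSeries ℝ} (hf : constantCoeff f = 0)
    {i p : ℕ} (h : i < p) : PowerSeries.coeff i (f ^ p) = 0 :=
  PowerSeries.X_pow_dvd_iff.mp (pow_dvd_pow_of_dvd (PowerSeries.X_dvd_iff.mpr hf) p) i h

/-- `E = exp(h)` as a power series, defined coefficientwise. -/
noncomputable def Eser (a : ℕ → ℝ) : PowerSeries ℝ :=
  PowerSeries.mk fun n => ∑ p ∈ Finset.range (n+1),
    PowerSeries.coeff n ((hSeries a)^p) / (p.factorial : ℝ)

lemma coeff_Eser (a : ℕ → ℝ) {n N : ℕ} (hnN : n ≤ N) :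
    PowerSeries.coeff n (Eser a) = ∑ p ∈ Finset.range (N+1),
      PowerSeries.coeff n ((hSeries a)^p) / (p.factorial : ℝ) := by
  rw [Eser, coeff_mk]
  refine Finset.sum_subset (by intro i hi; simp at *; omega) ?_
  intro p hp hp2
  simp only [mem_range, not_lt] at hp2
  rw [coeff_pow_zero_of_lt (hconst a) (by omega), zero_div]

lemma coeff_Eser_mul (a : ℕ → ℝ) (S : PowerSeries ℝ) (n : ℕ) :
    PowerSeries.coeff n (Eser a * S) = ∑ p ∈ Finset.range (n+1),
      (1 / (p.factorial : ℝ)) * PowerSeries.coeff n ((hSeries a)^p * S) := by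
  rw [coeff_mul]
  calc ∑ ij ∈ antidiagonal n, coeff ij.1 (Eser a) * coeff ij.2 S
      = ∑ ij ∈ antidiagonal n, ∑ p ∈ range (n+1),
          (1 / (p.factorial : ℝ)) * (coeff ij.1 ((hSeries a)^p) * coeff ij.2 S) := by
        refine sum_congr rfl fun ij hij => ?_
        rw [coeff_Eser a (Finset.HasAntidiagonal.antidiagonal.fst_le hij), sum_mul]
        refine sum_congr rfl fun p _ => ?_
        ring
    _ = ∑ p ∈ range (n+1), (1 / (p.factorial : ℝ)) *
          ∑ ij ∈ antidiagonal n, coeff ij.1 ((hSeries a)^p) * coeff ij.2 S := by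
        rw [Finset.sum_comm]
        simp [mul_sum]
    _ = _ := by simp [coeff_mul]

lemma box_reindex (n : ℕ) (f : ℕ → ℕ → ℝ) (c : ℕ → ℝ) (hc : ∀ r, n < r → c r = 0) :
    ∑ p ∈ range (n+1), ∑ k ∈ range (n+1), f p k * c (p+k)
      = ∑ r ∈ range (n+1), (∑ k ∈ range (r+1), f (r-k) k) * c r := by
  rw [← Finset.sum_product']
  rw [← Finset.sum_filter_of_ne (p := fun q : ℕ × ℕ => q.1 + q.2 ≤ n)
    (by intro q _ hq; by_contra hcon; exact hq (by rw [hc _ (by omega), mul_zero]))]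
  rw [show (∑ r ∈ range (n+1), (∑ k ∈ range (r+1), f (r-k) k) * c r)
      = ∑ q ∈ (range (n+1)).sigma (fun r => range (r+1)), f (q.1 - q.2) q.2 * c q.1 from
    by rw [Finset.sum_sigma]; exact sum_congr rfl fun r _ => by rw [sum_mul]]
  refine Finset.sum_nbij' (fun q => ⟨q.1 + q.2, q.2⟩) (fun q => (q.1 - q.2, q.2)) ?_ ?_ ?_ ?_ ?_
  · intro q hq; simp only [mem_filter, mem_product, mem_range] at hq
    simp only [mem_sigma, mem_range]; omega
  · intro q hq; simp only [mem_sigma, mem_range] at hq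
    simp only [mem_filter, mem_product, mem_range]; omega
  · intro q _; simp
  · intro q hq; simp only [mem_sigma, mem_range] at hq
    simp only []
    have : q.fst - q.snd + q.snd = q.fst := by omega
    rw [this]
  · intro q _; simp

lemma binom_sum (j : ℝ) (r : ℕ) :
    ∑ k ∈ range (r+1), (1/((r-k).factorial : ℝ)) * (j^k/(k.factorial : ℝ))
      = (j+1)^r / (r.factorial : ℝ) := by
  rw [add_pow, sum_div]
  refine sum_congr rfl fun k hk => ?_
  have hk' : k ≤ r := mem_range_succ_iff.mp hk
  have hc : ((r.choose k : ℝ)) * (k.factorial : ℝ) * ((r-k).factorial : ℝ) = r.factorial := by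
    exact_mod_cast congrArg (Nat.cast : ℕ → ℝ) (Nat.choose_mul_factorial_mul_factorial hk')
  have h1 : (k.factorial : ℝ) ≠ 0 := Nat.cast_ne_zero.mpr k.factorial_ne_zero
  have h2 : ((r-k).factorial : ℝ) ≠ 0 := Nat.cast_ne_zero.mpr (r-k).factorial_ne_zero
  have h3 : (r.factorial : ℝ) ≠ 0 := Nat.cast_ne_zero.mpr r.factorial_ne_zero
  field_simp
  linear_combination (-(j^k)) * hc

lemma coeff_Eser_pow (a : ℕ → ℝ) (j : ℕ) :
    ∀ n, PowerSeries.coeff n ((Eser a)^j)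
      = ∑ r ∈ range (n+1), ((j:ℝ)^r / (r.factorial : ℝ)) * PowerSeries.coeff n ((hSeries a)^r) := by
  induction j with
  | zero =>
    intro n
    rw [pow_zero, Finset.sum_eq_single 0]
    · simp
    · intro r _ hr
      simp [zero_pow hr]
    · simp
  | succ j ih =>
    intro n
    have step : ∀ p, PowerSeries.coeff n ((hSeries a)^p * (Eser a)^j)
        = ∑ k ∈ range (n+1), ((j:ℝ)^k/(k.factorial : ℝ)) *
            PowerSeries.coeff n ((hSeries a)^(p+k)) := by
      intro p
      rw [coeff_mul]
      calc ∑ ij ∈ antidiagonal n, coeff ij.1 ((hSeries a)^p) * coeff ij.2 ((Eser a)^j)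
          = ∑ ij ∈ antidiagonal n, ∑ k ∈ range (n+1),
              ((j:ℝ)^k/(k.factorial : ℝ)) * (coeff ij.1 ((hSeries a)^p) * coeff ij.2 ((hSeries a)^k)) := by
            refine sum_congr rfl fun ij hij => ?_
            have hE : coeff ij.2 ((Eser a)^j)
                = ∑ k ∈ range (n+1), ((j:ℝ)^k/(k.factorial : ℝ)) * coeff ij.2 ((hSeries a)^k) := by
              rw [ih ij.2]
              refine Finset.sum_subset ?_ ?_
              · intro i hi
                simp only [mem_range] at hi ⊢
                have := Finset.HasAntidiagonal.antidiagonal.snd_le hij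
                omega
              · intro k _ hk2
                simp only [mem_range, not_lt] at hk2
                rw [coeff_pow_zero_of_lt (hconst a) (by omega), mul_zero]
            rw [hE, mul_sum]
            refine sum_congr rfl fun k _ => by ring
        _ = ∑ k ∈ range (n+1), ((j:ℝ)^k/(k.factorial : ℝ)) *
              PowerSeries.coeff n ((hSeries a)^(p+k)) := by
            rw [Finset.sum_comm]
            refine sum_congr rfl fun k _ => ?_
            rw [← mul_sum, ← coeff_mul, ← pow_add]
    rw [pow_succ', coeff_Eser_mul]
    calc ∑ p ∈ range (n+1), (1 / (p.factorial : ℝ)) * PowerSeries.coeff n ((hSeries a)^p * (Eser a)^j)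
        = ∑ p ∈ range (n+1), ∑ k ∈ range (n+1),
            ((1/(p.factorial:ℝ)) * ((j:ℝ)^k/(k.factorial : ℝ))) * PowerSeries.coeff n ((hSeries a)^(p+k)) := by
          refine sum_congr rfl fun p _ => ?_
          rw [step p, mul_sum]
          refine sum_congr rfl fun k _ => by ring
      _ = ∑ r ∈ range (n+1),
            (∑ k ∈ range (r+1), (1/((r-k).factorial:ℝ)) * ((j:ℝ)^k/(k.factorial : ℝ)))
              * PowerSeries.coeff n ((hSeries a)^r) := by
          exact box_reindex n (fun p k => (1/(p.factorial:ℝ)) * ((j:ℝ)^k/(k.factorial : ℝ)))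
            (fun r => PowerSeries.coeff n ((hSeries a)^r))
            (fun r hr => coeff_pow_zero_of_lt (hconst a) hr)
      _ = _ := by
          refine sum_congr rfl fun r _ => ?_
          rw [binom_sum]
          push_cast
          ring

lemma Apoly_div (a : ℕ → ℝ) (n : ℕ) (x : ℝ) :
    Apoly a n x / (n.factorial : ℝ) = ∑ k ∈ Finset.range (n + 1),
      x ^ k / (k.factorial : ℝ) * PowerSeries.coeff n ((hSeries a) ^ k) := by
  rw [Apoly, mul_div_cancel_left₀ _ (Nat.cast_ne_zero.mpr n.factorial_ne_zero)]

lemma Apoly_div_eq (a : ℕ → ℝ) (n j : ℕ) :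
    Apoly a n (j : ℝ) / (n.factorial : ℝ) = PowerSeries.coeff n ((Eser a)^j) := by
  rw [Apoly_div, coeff_Eser_pow]

lemma Gser_eq (a : ℕ → ℝ) :
    (PowerSeries.mk fun j => if j = 0 then (0:ℝ) else Apoly a j 1 / (j.factorial : ℝ))
      = Eser a - 1 := by
  ext m
  rw [map_sub, coeff_mk]
  cases m with
  | zero =>
    rw [if_pos rfl, coeff_Eser a (le_refl 0)]
    simp
  | succ m =>
    rw [if_neg (by simp), coeff_one, if_neg (by simp), sub_zero,
      coeff_Eser a (le_refl (m+1)), Apoly_div]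
    refine sum_congr rfl fun k _ => ?_
    rw [one_pow]
    ring

lemma constE1 (a : ℕ → ℝ) : constantCoeff (Eser a - 1) = 0 := by
  rw [map_sub, map_one, ← coeff_zero_eq_constantCoeff_apply, coeff_Eser a (le_refl 0)]
  simp

lemma coeff_sub_one_pow (a : ℕ → ℝ) (m n : ℕ) :
    PowerSeries.coeff n ((Eser a - 1)^m) = ∑ k ∈ range (m+1),
      (-1:ℝ)^(k+m) * (m.choose k : ℝ) * PowerSeries.coeff n ((Eser a)^k) := by
  rw [sub_pow, map_sum]
  refine sum_congr rfl fun k _ => ?_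
  have e : ((-1 : ℝ⟦X⟧)^(k+m) * (Eser a)^k * 1^(m-k) * (m.choose k : ℝ⟦X⟧))
      = ((-1:ℝ)^(k+m) * (m.choose k : ℝ)) • (Eser a)^k := by
    rw [PowerSeries.smul_eq_C_mul, map_mul, map_pow, map_neg, map_one, map_natCast]
    ring
  rw [e, map_smul, smul_eq_mul]

lemma exp_neg_tsum (x : ℝ) : Real.exp (-x) = ∑' l : ℕ, (-x)^l / (l.factorial : ℝ) := by
  rw [Real.exp_eq_exp_ℝ, NormedSpace.exp_eq_tsum_div]

lemma pow_div_factorial_le_exp (y : ℝ) (hy : 0 ≤ y) (j : ℕ) :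
    y^j / (j.factorial : ℝ) ≤ Real.exp y := by
  rw [Real.exp_eq_exp_ℝ, NormedSpace.exp_eq_tsum_div]
  exact Summable.le_tsum (Real.summable_pow_div_factorial y) j (fun i _ => by positivity)

lemma summable_abs_aux (r : ℕ) (x : ℝ) :
    Summable (fun j : ℕ => |(j:ℝ)^r * x^j / (j.factorial : ℝ)|) := by
  set y : ℝ := 2 * (|x| + 1) with hy
  have key : ∀ j : ℕ, |(j:ℝ)^r * x^j / (j.factorial : ℝ)|
      ≤ Real.exp y * ((j:ℝ)^r * (1/2:ℝ)^j) := by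
    intro j
    have e1 : |(j:ℝ)^r * x^j / (j.factorial : ℝ)| = (j:ℝ)^r * |x|^j / (j.factorial : ℝ) := by
      simp [abs_div, abs_mul, abs_pow, Nat.abs_cast]
    rw [e1]
    calc (j:ℝ)^r * |x|^j / (j.factorial : ℝ)
        ≤ (j:ℝ)^r * (|x|+1)^j / (j.factorial : ℝ) := by
          gcongr
          · exact le_of_lt (lt_add_one _)
      _ = ((j:ℝ)^r * (1/2:ℝ)^j) * (y^j / (j.factorial : ℝ)) := by
          rw [hy, mul_pow]
          have h2 : ((j.factorial : ℝ)) ≠ 0 := Nat.cast_ne_zero.mpr j.factorial_ne_zero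
          field_simp
          rw [mul_assoc, ← mul_pow]; norm_num
      _ ≤ ((j:ℝ)^r * (1/2:ℝ)^j) * Real.exp y := by
          gcongr
          · exact pow_div_factorial_le_exp y (by positivity) j
      _ = Real.exp y * ((j:ℝ)^r * (1/2:ℝ)^j) := mul_comm _ _
  refine Summable.of_nonneg_of_le (fun j => abs_nonneg _) key ?_
  exact (summable_pow_mul_geometric_of_norm_lt_one r (by norm_num : ‖(1/2:ℝ)‖ < 1)).mul_left _

lemma g_eq (a : ℕ → ℝ) (n : ℕ) (x : ℝ) (j : ℕ) :
    PowerSeries.coeff n ((Eser a)^j) * x^j / (j.factorial : ℝ)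
      = ∑ r ∈ range (n+1),
          (PowerSeries.coeff n ((hSeries a)^r) / (r.factorial : ℝ)) *
            ((j:ℝ)^r * x^j / (j.factorial : ℝ)) := by
  rw [coeff_Eser_pow a j n, sum_mul, sum_div]
  exact sum_congr rfl fun r _ => by ring

lemma summable_norm_g (a : ℕ → ℝ) (n : ℕ) (x : ℝ) :
    Summable (fun j : ℕ => ‖PowerSeries.coeff n ((Eser a)^j) * x^j / (j.factorial : ℝ)‖) := by
  have hb : Summable (fun j : ℕ => ∑ r ∈ range (n+1),
      |PowerSeries.coeff n ((hSeries a)^r) / (r.factorial : ℝ)| *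
        |(j:ℝ)^r * x^j / (j.factorial : ℝ)|) :=
    summable_sum fun r _ => (summable_abs_aux r x).mul_left _
  refine Summable.of_nonneg_of_le (fun j => norm_nonneg _) (fun j => ?_) hb
  rw [Real.norm_eq_abs, g_eq]
  refine le_trans (Finset.abs_sum_le_sum_abs _ _) ?_
  refine sum_le_sum fun r _ => ?_
  rw [abs_mul]

lemma summable_g (a : ℕ → ℝ) (n : ℕ) (x : ℝ) :
    Summable (fun j : ℕ => PowerSeries.coeff n ((Eser a)^j) * x^j / (j.factorial : ℝ)) :=
  (summable_norm_g a n x).of_norm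

lemma summable_norm_exp (x : ℝ) :
    Summable (fun l : ℕ => ‖(-x)^l / (l.factorial : ℝ)‖) := by
  have : (fun l : ℕ => ‖(-x)^l / (l.factorial : ℝ)‖) = fun l : ℕ => |x|^l / (l.factorial : ℝ) := by
    funext l
    rw [Real.norm_eq_abs, abs_div, abs_pow, abs_neg, Nat.abs_cast]
  rw [this]
  exact Real.summable_pow_div_factorial |x|

lemma inner_sum (a : ℕ → ℝ) (n : ℕ) (x : ℝ) (m : ℕ) :
    ∑ kl ∈ antidiagonal m, ((-x)^kl.1 / (kl.1.factorial : ℝ)) *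
        (PowerSeries.coeff n ((Eser a)^kl.2) * x^kl.2 / (kl.2.factorial : ℝ))
      = x^m / (m.factorial : ℝ) * PowerSeries.coeff n ((Eser a - 1)^m) := by
  rw [Finset.Nat.sum_antidiagonal_eq_sum_range_succ_mk, ← Finset.sum_range_reflect,
    coeff_sub_one_pow, mul_sum]
  refine sum_congr rfl fun k hk => ?_
  have hk' : k ≤ m := mem_range_succ_iff.mp hk
  simp only [Nat.succ_sub_one, Nat.add_sub_cancel]
  rw [Nat.sub_sub_self hk']
  have hneg : (-x)^(m-k) = (-1:ℝ)^(k+m) * x^(m-k) := by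
    rw [neg_pow]
    congr 1
    rw [show k+m = (m-k)+2*k from by omega, pow_add, pow_mul, neg_one_sq, one_pow, mul_one]
  have hx : x^(m-k) * x^k = x^m := by rw [← pow_add]; congr 1; omega
  have hfact : ((m.choose k : ℝ)) * (k.factorial : ℝ) * ((m-k).factorial : ℝ) = m.factorial := by
    exact_mod_cast congrArg (Nat.cast : ℕ → ℝ) (Nat.choose_mul_factorial_mul_factorial hk')
  have h1 : ((m-k).factorial : ℝ) ≠ 0 := Nat.cast_ne_zero.mpr (m-k).factorial_ne_zero
  have h2 : (k.factorial : ℝ) ≠ 0 := Nat.cast_ne_zero.mpr k.factorial_ne_zero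
  have h3 : (m.factorial : ℝ) ≠ 0 := Nat.cast_ne_zero.mpr m.factorial_ne_zero
  set c := PowerSeries.coeff n ((Eser a)^k)
  calc (-x)^(m-k)/((m-k).factorial : ℝ) * (c * x^k / (k.factorial : ℝ))
      = (x^(m-k) * x^k) * ((-1:ℝ)^(k+m) * c) / (((m-k).factorial : ℝ) * (k.factorial : ℝ)) := by
        rw [hneg]; ring
    _ = x^m * ((-1:ℝ)^(k+m) * c) / (((m-k).factorial : ℝ) * (k.factorial : ℝ)) := by rw [hx]
    _ = x^m / (m.factorial : ℝ) * ((-1:ℝ)^(k+m) * (m.choose k : ℝ) * c) := by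
        field_simp
        linear_combination (-(x^m * c)) * hfact

end UmbralAux

open UmbralAux

/-- `1 + ∑_{n ≥ 1} A_n^{(1)}(x) t^n/n! = exp(x ∑_{j ≥ 1} A_j(1) t^j/j!)`, as an identity
of formal power series in `t` (the right-hand exponential being expanded as
`∑_k x^k G(t)^k / k!` with `G(t) = ∑_{j ≥ 1} A_j(1) t^j/j!`). -/
theorem umbral_egf_identity (a : ℕ → ℝ) (x : ℝ) :
    (PowerSeries.mk fun n =>
        if n = 0 then (1 : ℝ) else AumbralEval a n x / (n.factorial : ℝ))
      = PowerSeries.mk fun n =>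
          ∑ k ∈ Finset.range (n + 1), x ^ k / (k.factorial : ℝ) *
            PowerSeries.coeff n
              ((PowerSeries.mk fun j =>
                if j = 0 then (0 : ℝ) else Apoly a j 1 / (j.factorial : ℝ)) ^ k) := by
  have main : ∀ n : ℕ, AumbralEval a n x / (n.factorial : ℝ)
      = ∑ m ∈ Finset.range (n + 1), x ^ m / (m.factorial : ℝ) *
          PowerSeries.coeff n ((Eser a - 1) ^ m) := by
    intro n
    have step1 : AumbralEval a n x / (n.factorial : ℝ)
        = Real.exp (-x) * ∑' j : ℕ,
            PowerSeries.coeff n ((Eser a)^j) * x^j / (j.factorial : ℝ) := by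
      rw [AumbralEval, mul_div_assoc, ← tsum_div_const]
      congr 1
      refine tsum_congr fun j => ?_
      rw [show Apoly a n (j:ℝ) * x^j / (j.factorial : ℝ) / (n.factorial : ℝ)
            = (Apoly a n (j:ℝ) / (n.factorial : ℝ)) * x^j / (j.factorial : ℝ) from by ring,
        Apoly_div_eq]
    rw [step1, exp_neg_tsum,
      tsum_mul_tsum_eq_tsum_sum_antidiagonal_of_summable_norm
        (summable_norm_exp x) (summable_norm_g a n x)]
    have : ∀ m : ℕ, (∑ kl ∈ antidiagonal m, ((-x)^kl.1 / (kl.1.factorial : ℝ)) *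
          (PowerSeries.coeff n ((Eser a)^kl.2) * x^kl.2 / (kl.2.factorial : ℝ)))
        = x^m / (m.factorial : ℝ) * PowerSeries.coeff n ((Eser a - 1)^m) :=
      inner_sum a n x
    rw [tsum_congr this]
    refine tsum_eq_sum fun m hm => ?_
    simp only [mem_range, not_lt] at hm
    rcases Nat.lt_or_ge n m with hlt | hge
    · rw [coeff_pow_zero_of_lt (constE1 a) hlt, mul_zero]
    · omega
  ext n
  rw [PowerSeries.coeff_mk, PowerSeries.coeff_mk, Gser_eq]
  by_cases hn : n = 0
  · subst hn
    rw [if_pos rfl]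
    simp [coeff_Eser a (le_refl 0)]
  · rw [if_neg hn, main n]
end

section
/- With ⟨x⟩_n = x(x+1)⋯(x+n−1) the rising factorial, the Bell-umbral evaluation of ⟨x⟩_n equals the Lah polynomial: e^{-x} Σ_{j≥0} ⟨j⟩_n x^j/j! = L_n(x) = Σ_{k=1}^n (n!/k!) C(n−1,k−1) x^k (for n ≥ 1). -/
open Finset

lemma real_exp_tsum (x : ℝ) : ∑' j : ℕ, x ^ j / (j.factorial : ℝ) = Real.exp x := by
  rw [Real.exp_eq_exp_ℝ, NormedSpace.exp_eq_tsum_div]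

lemma desc_shift (k : ℕ) (x : ℝ) :
    ∀ j : ℕ, ((j + k).descFactorial k : ℝ) * x ^ (j + k) / ((j + k).factorial : ℝ)
      = x ^ k * (x ^ j / (j.factorial : ℝ)) := by
  intro j
  have h : (j + k).descFactorial k * j.factorial = (j + k).factorial := by
    rw [Nat.descFactorial_eq_factorial_mul_choose]
    have := Nat.choose_mul_factorial_mul_factorial (Nat.le_add_left k j)
    simp only [Nat.add_sub_cancel] at this
    simpa [mul_comm, mul_assoc, mul_left_comm] using this
  have hj : (j.factorial : ℝ) ≠ 0 := Nat.cast_ne_zero.2 j.factorial_ne_zero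
  have hjk : ((j + k).factorial : ℝ) ≠ 0 := Nat.cast_ne_zero.2 (j + k).factorial_ne_zero
  field_simp
  rw [pow_add]
  push_cast [← h]
  ring

lemma desc_support (k : ℕ) (x : ℝ) :
    ∀ j ∉ Set.range (· + k),
      (j.descFactorial k : ℝ) * x ^ j / (j.factorial : ℝ) = 0 := by
  intro j hj
  have hlt : j < k := by
    by_contra h
    exact hj ⟨j - k, Nat.sub_add_cancel (le_of_not_gt h)⟩
  simp [Nat.descFactorial_eq_zero_iff_lt.2 hlt]

lemma inj_add (k : ℕ) : Function.Injective (· + k : ℕ → ℕ) :=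
  fun a b h => by simpa using h

lemma desc_summable (k : ℕ) (x : ℝ) :
    Summable (fun j : ℕ => (j.descFactorial k : ℝ) * x ^ j / (j.factorial : ℝ)) := by
  rw [← (inj_add k).summable_iff (desc_support k x)]
  have : ((fun j : ℕ => (j.descFactorial k : ℝ) * x ^ j / (j.factorial : ℝ)) ∘ (· + k))
      = fun j : ℕ => x ^ k * (x ^ j / (j.factorial : ℝ)) := by
    funext j; exact desc_shift k x j
  rw [this]
  exact (Real.summable_pow_div_factorial x).mul_left _

lemma desc_tsum (k : ℕ) (x : ℝ) :
    ∑' j : ℕ, (j.descFactorial k : ℝ) * x ^ j / (j.factorial : ℝ)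
      = x ^ k * Real.exp x := by
  rw [← (inj_add k).tsum_eq (f := fun j : ℕ =>
      (j.descFactorial k : ℝ) * x ^ j / (j.factorial : ℝ))]
  · rw [show (fun j : ℕ => ((j + k).descFactorial k : ℝ) * x ^ (j + k) / ((j + k).factorial : ℝ))
        = fun j : ℕ => x ^ k * (x ^ j / (j.factorial : ℝ)) from funext (desc_shift k x)]
    rw [tsum_mul_left, real_exp_tsum]
  · intro j hj
    by_contra h
    exact hj (desc_support k x j h)

lemma asc_eq_sum (n : ℕ) (hn : 1 ≤ n) (j : ℕ) :
    j.ascFactorial n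
      = ∑ k ∈ Finset.Icc 1 n, n.factorial * (n - 1).choose (k - 1) * j.choose k := by
  rw [Nat.ascFactorial_eq_factorial_mul_choose', show j + n - 1 = j + (n - 1) by omega,
    Nat.add_choose_eq, Finset.Nat.sum_antidiagonal_eq_sum_range_succ_mk]
  have hr : Finset.range (n + 1) = insert 0 (Finset.Icc 1 n) := by
    ext a; simp only [Finset.mem_range, Finset.mem_insert, Finset.mem_Icc]; omega
  rw [hr, Finset.sum_insert (by simp)]
  have h0 : j.choose 0 * (n - 1).choose (n - 0) = 0 := by
    simp [Nat.choose_eq_zero_of_lt (by omega : n - 1 < n)]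
  rw [h0, zero_add, Finset.mul_sum]
  refine Finset.sum_congr rfl fun k hk => ?_
  simp only [Finset.mem_Icc] at hk
  rw [show n - k = (n - 1) - (k - 1) by omega, Nat.choose_symm (by omega)]
  ring

/-- The Bell-umbral evaluation of the rising factorial `⟨x⟩_n` is the Lah polynomial:
for `n ≥ 1` and all real `x`,
`e^{-x} ∑_{j ≥ 0} ⟨j⟩_n x^j/j! = ∑_{k=1}^n (n!/k!) C(n−1,k−1) x^k`. -/
theorem umbral_rising_factorial_eq_lah (n : ℕ) (hn : 1 ≤ n) (x : ℝ) :
    Real.exp (-x) *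
        ∑' j : ℕ, (ascPochhammer ℝ n).eval (j : ℝ) * x ^ j / (j.factorial : ℝ)
      = ∑ k ∈ Finset.Icc 1 n,
          ((n.factorial : ℝ) / (k.factorial : ℝ)) * ((n - 1).choose (k - 1) : ℝ) * x ^ k := by
  have hterm : ∀ j : ℕ, (ascPochhammer ℝ n).eval (j : ℝ) * x ^ j / (j.factorial : ℝ)
      = ∑ k ∈ Finset.Icc 1 n,
          ((n.factorial : ℝ) / (k.factorial : ℝ)) * ((n - 1).choose (k - 1) : ℝ) *
            ((j.descFactorial k : ℝ) * x ^ j / (j.factorial : ℝ)) := by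
    intro j
    rw [← Nat.cast_ascFactorial, asc_eq_sum n hn j]
    push_cast
    rw [Finset.sum_mul, Finset.sum_div]
    refine Finset.sum_congr rfl fun k _ => ?_
    have hk : (k.factorial : ℝ) ≠ 0 := Nat.cast_ne_zero.2 k.factorial_ne_zero
    rw [Nat.descFactorial_eq_factorial_mul_choose]
    push_cast
    field_simp
  rw [tsum_congr hterm, Summable.tsum_finsetSum (fun k _ => ((desc_summable k x).mul_left _))]
  have : ∀ k ∈ Finset.Icc 1 n,
      (∑' j : ℕ, ((n.factorial : ℝ) / (k.factorial : ℝ)) * ((n - 1).choose (k - 1) : ℝ) *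
        ((j.descFactorial k : ℝ) * x ^ j / (j.factorial : ℝ)))
      = ((n.factorial : ℝ) / (k.factorial : ℝ)) * ((n - 1).choose (k - 1) : ℝ) *
        (x ^ k * Real.exp x) := by
    intro k _
    rw [tsum_mul_left, desc_tsum]
  rw [Finset.sum_congr rfl this, Finset.mul_sum]
  refine Finset.sum_congr rfl fun k _ => ?_
  have hx := Real.exp_ne_zero x
  rw [Real.exp_neg]
  field_simp
end
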